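/- arXiv:2006.05073 — 3 statements merged into one kernel-verified Lean document; each statement's English description precedes it below -/
import Mathlib

section
/- Quasi-optimality of the derivative of the temporal Ritz projection (intermediate estimate in the proof of Lemma 3.3): let X be a complex Hilbert space, k ≥ 1 an integer, and I = [a, a+τ] with τ > 0. There exists a constant C depending only on k (independent of τ, u and X) such that for every u ∈ C¹(I;X), sup_{t∈I} ‖u'(t) − (Ru)'(t)‖ ≤ C · inf { sup_{t∈I} ‖u'(t) − g'(t)‖ : g an X-valued polynomial of degree ≤ k }. -/
/-!
Quasi-optimality of the derivative of the temporal Ritz projection (intermediate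
estimate in the proof of Lemma 3.3):
`sup_{t∈I} ‖u'(t) − (Ru)'(t)‖ ≤ C · inf_g sup_{t∈I} ‖u'(t) − g'(t)‖`, the infimum being
over all X-valued polynomials g of degree ≤ k, with C depending only on k.
-/

open MeasureTheory intervalIntegral
open scoped ComplexConjugate

universe u

noncomputable def Pc (n : ℕ) (c : Fin n → ℂ) (t : ℝ) : ℂ := ∑ i : Fin n, c i * (t:ℂ)^(i:ℕ)

lemma Pc_cont (n : ℕ) (c : Fin n → ℂ) : Continuous (fun t => Pc n c t) := by
  unfold Pc
  exact continuous_finset_sum _ fun i _ => continuous_const.mul ((Complex.continuous_ofReal.pow _))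

lemma normsq_Pc (n : ℕ) (c : Fin n → ℂ) (t : ℝ) :
    ‖Pc n c t‖^2 = ∑ i : Fin n, ∑ j : Fin n, (c i * conj (c j)).re * t^((i:ℕ)+(j:ℕ)) := by
  have h : (‖Pc n c t‖^2 : ℝ) = (Pc n c t * conj (Pc n c t)).re := by
    rw [Complex.mul_conj, Complex.ofReal_re, Complex.sq_norm]
  rw [h]
  unfold Pc
  rw [map_sum, Finset.sum_mul_sum, Complex.re_sum]
  apply Finset.sum_congr rfl; intro i _
  rw [Complex.re_sum]
  apply Finset.sum_congr rfl; intro j _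
  have : c i * (t:ℂ)^(i:ℕ) * conj (c j * (t:ℂ)^(j:ℕ))
      = (c i * conj (c j)) * ((t^((i:ℕ)+(j:ℕ)) : ℝ) : ℂ) := by
    push_cast
    rw [map_mul]
    have : conj ((t:ℂ)^(j:ℕ)) = (t:ℂ)^(j:ℕ) := by
      rw [← Complex.ofReal_pow]; exact Complex.conj_ofReal _
    rw [this]; ring
  rw [this, Complex.mul_re, Complex.ofReal_re, Complex.ofReal_im]
  ring

lemma integral_normsq_Pc (n : ℕ) (c : Fin n → ℂ) :
    (∫ t in (0:ℝ)..1, ‖Pc n c t‖^2)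
      = ∑ i : Fin n, ∑ j : Fin n, (c i * conj (c j)).re / ((i:ℕ)+(j:ℕ)+1) := by
  have : ∀ t : ℝ, ‖Pc n c t‖^2 = ∑ i : Fin n, ∑ j : Fin n, (c i * conj (c j)).re * t^((i:ℕ)+(j:ℕ)) :=
    normsq_Pc n c
  rw [intervalIntegral.integral_congr (fun t _ => this t)]
  rw [intervalIntegral.integral_finset_sum]
  · apply Finset.sum_congr rfl; intro i _
    rw [intervalIntegral.integral_finset_sum]
    · apply Finset.sum_congr rfl; intro j _
      rw [intervalIntegral.integral_const_mul, integral_pow, div_eq_mul_inv]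
      push_cast
      ring
    · intro j _
      exact (continuous_const.mul (continuous_pow _)).intervalIntegrable _ _
  · intro i _
    exact (continuous_finset_sum _ fun j _ =>
      continuous_const.mul (continuous_pow _)).intervalIntegrable _ _

noncomputable def Qc (n : ℕ) (c : Fin n → ℂ) : Polynomial ℂ :=
  ∑ i : Fin n, Polynomial.C (c i) * Polynomial.X ^ (i:ℕ)

lemma Qc_eval (n : ℕ) (c : Fin n → ℂ) (t : ℝ) : (Qc n c).eval (t:ℂ) = Pc n c t := by
  unfold Qc Pc
  rw [Polynomial.eval_finset_sum]
  simp

lemma Qc_coeff (n : ℕ) (c : Fin n → ℂ) (i : Fin n) : (Qc n c).coeff (i:ℕ) = c i := by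
  unfold Qc
  rw [Polynomial.finset_sum_coeff]
  rw [Finset.sum_eq_single i]
  · simp
  · intro j _ hj
    simp only [Polynomial.coeff_C_mul, Polynomial.coeff_X_pow]
    rw [if_neg (by simpa [Fin.val_eq_val] using (Ne.symm hj))]
    ring
  · simp

lemma Qc_ne_zero (n : ℕ) (c : Fin n → ℂ) (hc : c ≠ 0) : Qc n c ≠ 0 := by
  intro h
  apply hc
  funext i
  have := Qc_coeff n c i
  rw [h] at this
  simpa using this.symm

lemma integral_normsq_pos (n : ℕ) (c : Fin n → ℂ) (hc : c ≠ 0) :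
    0 < ∫ t in (0:ℝ)..1, ‖Pc n c t‖^2 := by
  have hZfin : {t : ℝ | Pc n c t = 0}.Finite := by
    have h1 : {z : ℂ | (Qc n c).IsRoot z}.Finite :=
      Polynomial.finite_setOf_isRoot (Qc_ne_zero n c hc)
    have h2 : {t : ℝ | Pc n c t = 0} ⊆ (fun t : ℝ => (t:ℂ)) ⁻¹' {z : ℂ | (Qc n c).IsRoot z} := by
      intro t ht
      simp only [Set.mem_preimage, Set.mem_setOf_eq, Polynomial.IsRoot]
      rw [Qc_eval]; exact ht
    exact Set.Finite.subset (h1.preimage (Complex.ofReal_injective.injOn)) h2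
  have hcont : Continuous (fun t => ‖Pc n c t‖^2) := (Pc_cont n c).norm.pow 2
  rw [intervalIntegral.integral_pos_iff_support_of_nonneg_ae]
  · refine ⟨by norm_num, ?_⟩
    have hsub : Set.Ioc (0:ℝ) 1 \ {t : ℝ | Pc n c t = 0}
        ⊆ Function.support (fun t => ‖Pc n c t‖^2) ∩ Set.Ioc 0 1 := by
      intro t ⟨ht1, ht2⟩
      refine ⟨?_, ht1⟩
      simp only [Function.mem_support]
      simp only [Set.mem_setOf_eq] at ht2
      exact pow_ne_zero _ (norm_ne_zero_iff.mpr ht2)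
    calc (0:ENNReal) < volume (Set.Ioc (0:ℝ) 1) := by simp
      _ = volume (Set.Ioc (0:ℝ) 1 \ {t : ℝ | Pc n c t = 0}) :=
          (measure_diff_null (hZfin.measure_zero _)).symm
      _ ≤ _ := measure_mono hsub
  · filter_upwards with t; positivity
  · exact hcont.intervalIntegrable _ _

lemma scalar_inverse_ineq (n : ℕ) (hn : 0 < n) :
    ∃ C : ℝ, 0 < C ∧ ∀ c : Fin n → ℂ, ∀ t ∈ Set.Icc (0:ℝ) 1,
      ‖Pc n c t‖^2 ≤ C * ∫ s in (0:ℝ)..1, ‖Pc n c s‖^2 := by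
  set N2 : (Fin n → ℂ) → ℝ := fun c => ∫ s in (0:ℝ)..1, ‖Pc n c s‖^2 with hN2
  have hN2cont : Continuous N2 := by
    have : N2 = fun (c : Fin n → ℂ) => ∑ i : Fin n, ∑ j : Fin n, (c i * conj (c j)).re / ((i:ℕ)+(j:ℕ)+1) := by
      funext c; exact integral_normsq_Pc n c
    rw [this]
    refine continuous_finset_sum _ fun i _ => continuous_finset_sum _ fun j _ => ?_
    exact (Complex.continuous_re.comp
      ((continuous_apply i).mul (Complex.continuous_conj.comp (continuous_apply j)))).div_const _
  have : Nonempty (Fin n) := ⟨⟨0, hn⟩⟩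
  have hne : (Metric.sphere (0 : Fin n → ℂ) 1).Nonempty :=
    NormedSpace.sphere_nonempty.mpr zero_le_one
  obtain ⟨c₀, hc₀mem, hc₀min'⟩ :=
    (isCompact_sphere (0 : Fin n → ℂ) 1).exists_isMinOn hne hN2cont.continuousOn
  have hc₀min : ∀ x ∈ Metric.sphere (0 : Fin n → ℂ) 1, N2 c₀ ≤ N2 x := fun x hx => hc₀min' hx
  have hc₀ : c₀ ≠ 0 := by
    intro h
    rw [mem_sphere_zero_iff_norm, h] at hc₀mem
    simp at hc₀mem
  have hm : 0 < N2 c₀ := integral_normsq_pos n c₀ hc₀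
  refine ⟨(n:ℝ)^2 / N2 c₀, by positivity, ?_⟩
  intro c t ht
  by_cases hc : c = 0
  · subst hc
    simp [Pc, N2]
  -- scaling
  have hr : 0 < ‖c‖ := norm_pos_iff.mpr hc
  have hsmul : ∀ (r : ℝ) (d : Fin n → ℂ) (s : ℝ), Pc n (r • d) s = r • Pc n d s := by
    intro r d s
    unfold Pc
    rw [Finset.smul_sum]
    apply Finset.sum_congr rfl; intro i _
    simp only [Pi.smul_apply, Complex.real_smul]
    ring
  have hmem : (‖c‖⁻¹ • c) ∈ Metric.sphere (0 : Fin n → ℂ) 1 := by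
    rw [mem_sphere_zero_iff_norm, norm_smul]
    simp [abs_of_pos (inv_pos.mpr hr), inv_mul_cancel₀ hr.ne']
  have hkey : N2 c₀ ≤ ‖c‖⁻¹^2 * N2 c := by
    have := hc₀min _ hmem
    have heq : N2 (‖c‖⁻¹ • c) = ‖c‖⁻¹^2 * N2 c := by
      simp only [hN2]
      rw [← intervalIntegral.integral_const_mul]
      apply intervalIntegral.integral_congr
      intro s _
      show ‖Pc n (‖c‖⁻¹ • c) s‖^2 = ‖c‖⁻¹^2 * ‖Pc n c s‖^2
      rw [hsmul, norm_smul, mul_pow]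
      simp [abs_of_pos (inv_pos.mpr hr)]
    rw [heq] at this
    exact this
  have hnorm2 : ‖c‖^2 * N2 c₀ ≤ N2 c := by
    have := mul_le_mul_of_nonneg_left hkey (le_of_lt (pow_pos hr 2))
    calc ‖c‖^2 * N2 c₀ ≤ ‖c‖^2 * (‖c‖⁻¹^2 * N2 c) := this
      _ = N2 c := by field_simp
  -- pointwise bound
  have hpt : ‖Pc n c t‖ ≤ (n:ℝ) * ‖c‖ := by
    unfold Pc
    calc ‖∑ i : Fin n, c i * (t:ℂ)^(i:ℕ)‖ ≤ ∑ i : Fin n, ‖c i * (t:ℂ)^(i:ℕ)‖ :=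
          norm_sum_le _ _
      _ ≤ ∑ _i : Fin n, ‖c‖ := by
          apply Finset.sum_le_sum; intro i _
          rw [norm_mul]
          calc ‖c i‖ * ‖(t:ℂ)^(i:ℕ)‖ ≤ ‖c i‖ * 1 := by
                apply mul_le_mul_of_nonneg_left _ (norm_nonneg _)
                rw [norm_pow, Complex.norm_real]
                apply pow_le_one₀ (abs_nonneg t)
                rw [abs_le]; exact ⟨by linarith [ht.1], ht.2⟩
            _ = ‖c i‖ := mul_one _
            _ ≤ ‖c‖ := norm_le_pi_norm c i
      _ = (n:ℝ) * ‖c‖ := by simp [mul_comm]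
  calc ‖Pc n c t‖^2 ≤ ((n:ℝ) * ‖c‖)^2 := by
        apply pow_le_pow_left₀ (norm_nonneg _) hpt
    _ = (n:ℝ)^2 * ‖c‖^2 := by ring
    _ ≤ (n:ℝ)^2 * (N2 c / N2 c₀) := by
        apply mul_le_mul_of_nonneg_left _ (by positivity)
        rw [le_div_iff₀ hm]
        exact hnorm2
    _ = (n:ℝ)^2 / N2 c₀ * N2 c := by ring

lemma Qc_natDegree_lt (n : ℕ) (hn : 0 < n) (c : Fin n → ℂ) (hc : Qc n c ≠ 0) :
    (Qc n c).natDegree < n := by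
  rw [Polynomial.natDegree_lt_iff_degree_lt hc]
  rw [Polynomial.degree_lt_iff_coeff_zero]
  intro m hm
  unfold Qc
  rw [Polynomial.finset_sum_coeff]
  apply Finset.sum_eq_zero
  intro i _
  simp only [Polynomial.coeff_C_mul, Polynomial.coeff_X_pow]
  rw [if_neg, mul_zero]
  intro h
  have hm' : n ≤ m := by exact_mod_cast hm
  have := i.isLt
  omega

lemma scalar_inverse_ineq_scaled (n : ℕ) (hn : 0 < n) :
    ∃ C : ℝ, 0 < C ∧ ∀ (c : Fin n → ℂ) (a τ : ℝ), 0 < τ → ∀ t ∈ Set.Icc a (a+τ),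
      ‖Pc n c t‖^2 ≤ C / τ * ∫ s in a..(a+τ), ‖Pc n c s‖^2 := by
  obtain ⟨C, hC, hCb⟩ := scalar_inverse_ineq n hn
  refine ⟨C, hC, ?_⟩
  intro c a τ hτ t ht
  by_cases hc : c = 0
  · subst hc
    simp [Pc]
  set q : Polynomial ℂ := (Qc n c).comp (Polynomial.C (τ:ℂ) * Polynomial.X + Polynomial.C (a:ℂ))
    with hq
  have hqdeg : q.natDegree < n := by
    calc q.natDegree ≤ (Qc n c).natDegree * (Polynomial.C (τ:ℂ) * Polynomial.X
          + Polynomial.C (a:ℂ)).natDegree := Polynomial.natDegree_comp_le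
      _ ≤ (Qc n c).natDegree * 1 :=
          Nat.mul_le_mul_left _ Polynomial.natDegree_linear_le
      _ < n := by rw [mul_one]; exact Qc_natDegree_lt n hn c (Qc_ne_zero n c hc)
  set d : Fin n → ℂ := fun i => q.coeff (i:ℕ) with hd
  have hPd : ∀ x : ℝ, Pc n d x = Pc n c (τ * x + a) := by
    intro x
    have h1 : Pc n d x = q.eval (x:ℂ) := by
      rw [Polynomial.eval_eq_sum_range' hqdeg]
      unfold Pc
      exact Fin.sum_univ_eq_sum_range (fun i => q.coeff i * (x:ℂ)^i) n
    have h2 : q.eval (x:ℂ) = Pc n c (τ * x + a) := by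
      rw [hq, Polynomial.eval_comp]
      have hev : (Polynomial.C (τ:ℂ) * Polynomial.X + Polynomial.C (a:ℂ)).eval (x:ℂ)
          = ((τ * x + a : ℝ) : ℂ) := by push_cast; simp
      rw [hev, Qc_eval]
    rw [h1, h2]
  have hx : (t - a)/τ ∈ Set.Icc (0:ℝ) 1 := by
    constructor
    · exact div_nonneg (by linarith [ht.1]) hτ.le
    · rw [div_le_one hτ]; linarith [ht.2]
  have hteq : τ * ((t-a)/τ) + a = t := by field_simp; ring
  have hint : ∫ s in (0:ℝ)..1, ‖Pc n d s‖^2 = τ⁻¹ * ∫ s in a..(a+τ), ‖Pc n c s‖^2 := by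
    have hcg : ∀ s, ‖Pc n d s‖^2 = (fun y => ‖Pc n c y‖^2) (τ * s + a) := fun s => by
      simp only []; rw [hPd]
    rw [intervalIntegral.integral_congr (fun s _ => hcg s)]
    rw [intervalIntegral.integral_comp_mul_add (fun y => ‖Pc n c y‖^2) hτ.ne' a]
    rw [show τ*0+a = a by ring, show τ*1+a = a+τ by ring, smul_eq_mul]
  calc ‖Pc n c t‖^2 = ‖Pc n d ((t-a)/τ)‖^2 := by rw [hPd, hteq]
    _ ≤ C * ∫ s in (0:ℝ)..1, ‖Pc n d s‖^2 := hCb d _ hx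
    _ = C / τ * ∫ s in a..(a+τ), ‖Pc n c s‖^2 := by rw [hint]; ring

/-- `f : ℝ → X` is an `X`-valued polynomial of degree at most `m`. -/
def IsPolyDeg (X : Type*) [AddCommGroup X] [Module ℝ X] (m : ℕ) (f : ℝ → X) : Prop :=
  ∃ φ : Fin (m + 1) → X, ∀ t : ℝ, f t = ∑ i : Fin (m + 1), t ^ (i : ℕ) • φ i

section Vec
variable {X : Type u} [NormedAddCommGroup X] [InnerProductSpace ℂ X]

lemma isPolyDeg_continuous {m : ℕ} {f : ℝ → X} (h : IsPolyDeg X m f) : Continuous f := by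
  obtain ⟨φ, hφ⟩ := h
  have : f = fun t => ∑ i : Fin (m+1), t ^ (i:ℕ) • φ i := funext hφ
  rw [this]
  exact continuous_finset_sum _ fun i _ => (continuous_pow _).smul continuous_const

lemma isPolyDeg_sub {m : ℕ} {f g : ℝ → X} (hf : IsPolyDeg X m f) (hg : IsPolyDeg X m g) :
    IsPolyDeg X m (fun t => f t - g t) := by
  obtain ⟨φ, hφ⟩ := hf; obtain ⟨ψ, hψ⟩ := hg
  refine ⟨fun i => φ i - ψ i, fun t => ?_⟩
  show f t - g t = _
  rw [hφ, hψ, ← Finset.sum_sub_distrib]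
  exact Finset.sum_congr rfl fun i _ => (smul_sub _ _ _).symm

lemma isPolyDeg_deriv {m : ℕ} {f : ℝ → X} (h : IsPolyDeg X (m+1) f) :
    IsPolyDeg X m (deriv f) := by
  obtain ⟨φ, hφ⟩ := h
  have hf : f = fun t => ∑ i : Fin (m+2), t ^ (i:ℕ) • φ i := funext hφ
  have hder : ∀ t : ℝ, HasDerivAt f (∑ i : Fin (m+2), (((i:ℕ):ℝ) * t ^ ((i:ℕ)-1)) • φ i) t := by
    intro t
    rw [hf]
    apply HasDerivAt.fun_sum
    intro i _
    exact (hasDerivAt_pow (i:ℕ) t).smul_const (φ i)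
  refine ⟨fun j => (((j:ℕ):ℝ)+1) • φ j.succ, fun t => ?_⟩
  rw [(hder t).deriv, Fin.sum_univ_succ]
  simp only [Fin.val_zero, Nat.cast_zero, zero_mul, zero_smul, zero_add]
  apply Finset.sum_congr rfl
  intro j _
  rw [Fin.val_succ, Nat.add_sub_cancel, smul_smul, mul_comm]
  push_cast
  ring_nf

lemma isPolyDeg_deriv_continuous {m : ℕ} {f : ℝ → X} (h : IsPolyDeg X (m+1) f) :
    Continuous (deriv f) := isPolyDeg_continuous (isPolyDeg_deriv h)

end Vec

lemma vector_inverse_ineq (m : ℕ) :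
    ∃ C : ℝ, 0 < C ∧ ∀ (X : Type u) [NormedAddCommGroup X] [InnerProductSpace ℂ X]
      (v : ℝ → X), IsPolyDeg X m v → ∀ (a τ : ℝ), 0 < τ → ∀ t₀ ∈ Set.Icc a (a+τ),
      ‖v t₀‖^2 ≤ C / τ * ∫ s in a..(a+τ), ‖v s‖^2 := by
  obtain ⟨C, hC, hCb⟩ := scalar_inverse_ineq_scaled (m+1) (Nat.succ_pos m)
  refine ⟨C, hC, ?_⟩
  intro X _ _ v hv a τ hτ t₀ ht₀
  have hvc : Continuous v := isPolyDeg_continuous hv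
  obtain ⟨φ, hφ⟩ := hv
  have hab : a ≤ a + τ := by linarith
  have hint_nonneg : 0 ≤ ∫ s in a..(a+τ), ‖v s‖^2 :=
    intervalIntegral.integral_nonneg hab (fun s _ => by positivity)
  by_cases hx : v t₀ = 0
  · rw [hx, norm_zero]
    have h0 : (0:ℝ)^2 = 0 := by norm_num
    rw [h0]
    exact mul_nonneg (by positivity) hint_nonneg
  set x := v t₀ with hxdef
  set c : Fin (m+1) → ℂ := fun i => inner ℂ x (φ i) with hcdef
  have hPc : ∀ s : ℝ, Pc (m+1) c s = inner ℂ x (v s) := by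
    intro s
    rw [hφ, inner_sum]
    unfold Pc
    apply Finset.sum_congr rfl; intro i _
    rw [@RCLike.real_smul_eq_coe_smul ℂ, inner_smul_right]
    rw [mul_comm]
    norm_cast
  have h1 : ‖Pc (m+1) c t₀‖^2 = ‖x‖^4 := by
    rw [hPc, ← hxdef, inner_self_eq_norm_sq_to_K]
    rw [norm_pow, RCLike.norm_ofReal, abs_norm]
    ring
  have h2 : ∀ s : ℝ, ‖Pc (m+1) c s‖^2 ≤ ‖x‖^2 * ‖v s‖^2 := by
    intro s
    rw [hPc]
    calc ‖(inner ℂ x (v s) : ℂ)‖^2 ≤ (‖x‖ * ‖v s‖)^2 :=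
          pow_le_pow_left₀ (norm_nonneg _) (norm_inner_le_norm x (v s)) 2
      _ = ‖x‖^2 * ‖v s‖^2 := by ring
  have h3 : ∫ s in a..(a+τ), ‖Pc (m+1) c s‖^2 ≤ ‖x‖^2 * ∫ s in a..(a+τ), ‖v s‖^2 := by
    rw [← intervalIntegral.integral_const_mul]
    apply intervalIntegral.integral_mono_on hab
      (((Pc_cont _ _).norm.pow 2).intervalIntegrable _ _)
      ((continuous_const.mul (hvc.norm.pow 2)).intervalIntegrable _ _)
      (fun s _ => h2 s)
  have h4 := hCb c a τ hτ t₀ ht₀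
  have h5 : ‖x‖^2 * ‖x‖^2 ≤ (C/τ * ∫ s in a..(a+τ), ‖v s‖^2) * ‖x‖^2 := by
    have : ‖x‖^4 ≤ C/τ * (‖x‖^2 * ∫ s in a..(a+τ), ‖v s‖^2) := by
      rw [← h1]
      exact h4.trans (mul_le_mul_of_nonneg_left h3 (by positivity))
    nlinarith [this]
  have hxpos : 0 < ‖x‖^2 := by
    have : ‖x‖ > 0 := norm_pos_iff.mpr hx
    positivity
  exact le_of_mul_le_mul_right h5 hxpos

lemma bdd_range_sup (a b : ℝ) (e : ℝ → ℝ) (he : Continuous e) :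
    BddAbove (Set.range fun t : Set.Icc a b => e t) := by
  rw [← Set.image_eq_range]
  exact (isCompact_Icc.image_of_continuousOn he.continuousOn).bddAbove

/-- `p` is the temporal Ritz projection of `u` on `[a,b]`: the `X`-valued polynomial of
degree ≤ k with `p a = u a` whose derivative is the L²(a,b)-projection of `u'` onto
polynomials of degree ≤ k-1. -/
def IsRitzOn (X : Type*) [NormedAddCommGroup X] [InnerProductSpace ℂ X]
    (a b : ℝ) (k : ℕ) (u p : ℝ → X) : Prop :=
  IsPolyDeg X k p ∧ p a = u a ∧
    ∀ χ : ℝ → X, IsPolyDeg X (k - 1) χ →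
      (∫ t in a..b, (inner ℂ (deriv u t - deriv p t) (χ t) : ℂ)) = 0

theorem ritz_derivative_quasioptimality (k : ℕ) (hk : 1 ≤ k) :
    -- C depends only on k (not on τ, u, X)
    ∃ C : ℝ, 0 < C ∧
      -- X : a complex Hilbert space
      ∀ (X : Type u) [NormedAddCommGroup X] [InnerProductSpace ℂ X] [CompleteSpace X],
      ∀ (a τ : ℝ), 0 < τ →
      ∀ u : ℝ → X, ContDiff ℝ 1 u →
      ∀ p : ℝ → X, IsRitzOn X a (a + τ) k u p →
        (⨆ t : Set.Icc a (a + τ), ‖deriv u (t : ℝ) - deriv p (t : ℝ)‖)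
          ≤ C * ⨅ g : {g : ℝ → X // IsPolyDeg X k g},
              ⨆ t : Set.Icc a (a + τ), ‖deriv u (t : ℝ) - deriv g.1 (t : ℝ)‖ := by
  obtain ⟨k', rfl⟩ : ∃ k', k = k' + 1 := ⟨k - 1, (Nat.succ_pred_eq_of_pos hk).symm⟩
  obtain ⟨C₀, hC₀, hC₀b⟩ := vector_inverse_ineq.{u} k'
  refine ⟨1 + C₀, by linarith, ?_⟩
  intro X _ _ _ a τ hτ u hu p hritz
  have hab : a ≤ a + τ := by linarith
  have hIcc : Nonempty (Set.Icc a (a+τ)) := (Set.nonempty_Icc.mpr hab).to_subtype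
  obtain ⟨hp, -, horth⟩ := hritz
  have hf : Continuous (deriv u) := hu.continuous_deriv le_rfl
  have hdp : IsPolyDeg X k' (deriv p) := isPolyDeg_deriv hp
  have hdpc : Continuous (deriv p) := isPolyDeg_continuous hdp
  have key : ∀ g : {g : ℝ → X // IsPolyDeg X (k'+1) g},
      (⨆ t : Set.Icc a (a + τ), ‖deriv u (t:ℝ) - deriv p (t:ℝ)‖)
        ≤ (1 + C₀) * ⨆ t : Set.Icc a (a + τ), ‖deriv u (t:ℝ) - deriv g.1 (t:ℝ)‖ := by
    rintro ⟨g, hg⟩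
    simp only
    have hdg : IsPolyDeg X k' (deriv g) := isPolyDeg_deriv hg
    have hdgc : Continuous (deriv g) := isPolyDeg_continuous hdg
    set v : ℝ → X := fun t => deriv p t - deriv g t with hvdef
    have hv : IsPolyDeg X k' v := isPolyDeg_sub hdp hdg
    have hvc : Continuous v := isPolyDeg_continuous hv
    set Sg := ⨆ t : Set.Icc a (a + τ), ‖deriv u (t:ℝ) - deriv g (t:ℝ)‖ with hSg
    set M := ⨆ t : Set.Icc a (a + τ), ‖v (t:ℝ)‖ with hM
    have bddSg : BddAbove (Set.range fun t : Set.Icc a (a+τ) => ‖deriv u (t:ℝ) - deriv g (t:ℝ)‖) :=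
      bdd_range_sup a (a+τ) _ (hf.sub hdgc).norm
    have bddM : BddAbove (Set.range fun t : Set.Icc a (a+τ) => ‖v (t:ℝ)‖) :=
      bdd_range_sup a (a+τ) _ hvc.norm
    have hSgle : ∀ t ∈ Set.Icc a (a+τ), ‖deriv u t - deriv g t‖ ≤ Sg := fun t ht =>
      le_ciSup bddSg (⟨t, ht⟩ : Set.Icc a (a+τ))
    have hMle : ∀ t ∈ Set.Icc a (a+τ), ‖v t‖ ≤ M := fun t ht =>
      le_ciSup bddM (⟨t, ht⟩ : Set.Icc a (a+τ))
    have hSg0 : 0 ≤ Sg := le_trans (norm_nonneg _) (hSgle a ⟨le_refl a, hab⟩)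
    have hM0 : 0 ≤ M := le_trans (norm_nonneg _) (hMle a ⟨le_refl a, hab⟩)
    have horth' := horth v hv
    set E := ∫ t in a..(a+τ), ‖v t‖^2 with hE
    have hE0 : 0 ≤ E := intervalIntegral.integral_nonneg hab (fun t _ => by positivity)
    have hsplit : ∀ t : ℝ, (inner ℂ (deriv u t - deriv p t) (v t) : ℂ)
        = inner ℂ (deriv u t - deriv g t) (v t) - inner ℂ (v t) (v t) := by
      intro t
      rw [← inner_sub_left]
      congr 1
      show deriv u t - deriv p t = deriv u t - deriv g t - (deriv p t - deriv g t)
      abel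
    have hI1 : IntervalIntegrable (fun t => (inner ℂ (deriv u t - deriv g t) (v t) : ℂ))
        volume a (a+τ) := (Continuous.inner (hf.sub hdgc) hvc).intervalIntegrable _ _
    have hI2 : IntervalIntegrable (fun t => (inner ℂ (v t) (v t) : ℂ)) volume a (a+τ) :=
      (Continuous.inner hvc hvc).intervalIntegrable _ _
    have hEeq : ((E:ℂ)) = ∫ t in a..(a+τ), (inner ℂ (deriv u t - deriv g t) (v t) : ℂ) := by
      have h1 : (∫ t in a..(a+τ), (inner ℂ (deriv u t - deriv p t) (v t) : ℂ))
          = (∫ t in a..(a+τ), (inner ℂ (deriv u t - deriv g t) (v t) : ℂ))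
            - ∫ t in a..(a+τ), (inner ℂ (v t) (v t) : ℂ) := by
        rw [← intervalIntegral.integral_sub hI1 hI2]
        exact intervalIntegral.integral_congr fun t _ => hsplit t
      rw [horth'] at h1
      have h2 : (∫ t in a..(a+τ), (inner ℂ (v t) (v t) : ℂ)) = (E : ℂ) := by
        rw [hE, ← intervalIntegral.integral_ofReal]
        refine intervalIntegral.integral_congr fun t _ => ?_
        rw [inner_self_eq_norm_sq_to_K]
        norm_cast
      rw [h2] at h1
      exact (sub_eq_zero.mp h1.symm).symm
    have hEle : E ≤ τ * (Sg * M) := by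
      calc E = ‖(E:ℂ)‖ := by rw [Complex.norm_real, Real.norm_of_nonneg hE0]
        _ = ‖∫ t in a..(a+τ), (inner ℂ (deriv u t - deriv g t) (v t) : ℂ)‖ := by rw [hEeq]
        _ ≤ ∫ t in a..(a+τ), ‖(inner ℂ (deriv u t - deriv g t) (v t) : ℂ)‖ :=
            intervalIntegral.norm_integral_le_integral_norm hab
        _ ≤ ∫ _t in a..(a+τ), Sg * M := by
            apply intervalIntegral.integral_mono_on hab
              ((Continuous.inner (hf.sub hdgc) hvc).norm.intervalIntegrable _ _)
              intervalIntegrable_const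
            intro t ht
            calc ‖(inner ℂ (deriv u t - deriv g t) (v t) : ℂ)‖
                ≤ ‖deriv u t - deriv g t‖ * ‖v t‖ := norm_inner_le_norm _ _
              _ ≤ Sg * M := mul_le_mul (hSgle t ht) (hMle t ht) (norm_nonneg _) hSg0
        _ = τ * (Sg * M) := by rw [intervalIntegral.integral_const, smul_eq_mul]; ring_nf
    have hMC : M ≤ C₀ * Sg := by
      rcases eq_or_lt_of_le hM0 with h | hMpos
      · rw [← h]; positivity
      have hsq : ∀ t ∈ Set.Icc a (a+τ), ‖v t‖^2 ≤ C₀ * Sg * M := by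
        intro t ht
        calc ‖v t‖^2 ≤ C₀ / τ * E := hC₀b X v hv a τ hτ t ht
          _ ≤ C₀ / τ * (τ * (Sg * M)) := mul_le_mul_of_nonneg_left hEle (by positivity)
          _ = C₀ * Sg * M := by field_simp
      have hMsqrt : M ≤ Real.sqrt (C₀ * Sg * M) := by
        apply ciSup_le
        intro t
        rw [← Real.sqrt_sq (norm_nonneg (v (t:ℝ)))]
        exact Real.sqrt_le_sqrt (hsq t t.2)
      have hMsq : M * M ≤ C₀ * Sg * M := by
        have h1 : M^2 ≤ Real.sqrt (C₀ * Sg * M)^2 := pow_le_pow_left₀ hM0 hMsqrt 2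
        rw [Real.sq_sqrt (by positivity)] at h1
        calc M * M = M^2 := by ring
          _ ≤ C₀ * Sg * M := h1
      exact le_of_mul_le_mul_right hMsq hMpos
    apply ciSup_le
    intro t
    calc ‖deriv u (t:ℝ) - deriv p (t:ℝ)‖
        = ‖(deriv u (t:ℝ) - deriv g (t:ℝ)) - v (t:ℝ)‖ := by
          congr 1
          show _ = _ - (deriv p (t:ℝ) - deriv g (t:ℝ))
          abel
      _ ≤ ‖deriv u (t:ℝ) - deriv g (t:ℝ)‖ + ‖v (t:ℝ)‖ := norm_sub_le _ _
      _ ≤ Sg + C₀ * Sg := add_le_add (hSgle t t.2) ((hMle t t.2).trans hMC)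
      _ = (1 + C₀) * Sg := by ring
  have hnonempty : Nonempty {g : ℝ → X // IsPolyDeg X (k'+1) g} := ⟨⟨p, hp⟩⟩
  have hCpos : (0:ℝ) < 1 + C₀ := by linarith
  set Sp := ⨆ t : Set.Icc a (a + τ), ‖deriv u (t:ℝ) - deriv p (t:ℝ)‖ with hSp
  have hle : Sp / (1 + C₀) ≤ ⨅ g : {g : ℝ → X // IsPolyDeg X (k'+1) g},
      ⨆ t : Set.Icc a (a + τ), ‖deriv u (t:ℝ) - deriv g.1 (t:ℝ)‖ := by
    apply le_ciInf
    intro g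
    rw [div_le_iff₀ hCpos]
    rw [mul_comm]
    exact key g
  calc Sp = (1 + C₀) * (Sp / (1 + C₀)) := by field_simp
    _ ≤ (1 + C₀) * ⨅ g : {g : ℝ → X // IsPolyDeg X (k'+1) g},
        ⨆ t : Set.Icc a (a + τ), ‖deriv u (t:ℝ) - deriv g.1 (t:ℝ)‖ :=
      mul_le_mul_of_nonneg_left hle (by linarith)
end

section
/- Projection energy identity (established in the proofs of Theorem 3.2 and Lemma 4.3, combining (3.18)/(4.9)–(4.11)): let X be a complex Hilbert space, k ≥ 1 an integer, and I = [a, b] with τ = b − a > 0. Then for every X-valued polynomial v of degree ≤ k, (1/2)·∫_I ‖(Pv)(t)‖² dt + (τ/2)·‖(Pv)(a)‖² = τ·Re⟨v(a), (Pv)(a)⟩ + Re ∫_I ⟨v'(t), (b − t)·(Pv)(t)⟩ dt. -/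
/-!
Projection energy identity (combining (3.18)/(4.9)–(4.11) in the proofs of Theorem 3.2
and Lemma 4.3): for every `X`-valued polynomial `v` of degree ≤ k,
`(1/2) ∫_I ‖(Pv)(t)‖² dt + (τ/2) ‖(Pv)(a)‖²
   = τ Re⟨v(a), (Pv)(a)⟩ + Re ∫_I ⟨v'(t), (b − t)(Pv)(t)⟩ dt`.
-/

open MeasureTheory

/-- `p` is the L²(a,b)-orthogonal projection of `u` onto `X`-valued polynomials of
degree ≤ k-1. -/
def IsL2ProjOn (X : Type*) [NormedAddCommGroup X] [InnerProductSpace ℂ X]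
    (a b : ℝ) (k : ℕ) (u p : ℝ → X) : Prop :=
  IsPolyDeg X (k - 1) p ∧
    ∀ χ : ℝ → X, IsPolyDeg X (k - 1) χ →
      (∫ t in a..b, (inner ℂ (u t - p t) (χ t) : ℂ)) = 0

section Aux

variable {X : Type*} [NormedAddCommGroup X] [InnerProductSpace ℂ X]

private lemma polyAux_hasDerivAt (ψ : ℕ → X) (n : ℕ) (t : ℝ) :
    HasDerivAt (fun s : ℝ => ∑ j ∈ Finset.range (n + 1), s ^ j • ψ j)
      (∑ i ∈ Finset.range n, (((i : ℝ) + 1) * t ^ i) • ψ (i + 1)) t := by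
  induction n with
  | zero =>
    exact (hasDerivAt_const t (ψ 0)).congr_of_eventuallyEq
      (by filter_upwards with s; simp)
  | succ n ih =>
    have h2 : HasDerivAt (fun s : ℝ => s ^ (n + 1) • ψ (n + 1))
        ((((n : ℝ) + 1) * t ^ n) • ψ (n + 1)) t := by
      simpa using (hasDerivAt_pow (n + 1) t).smul_const (ψ (n + 1))
    have := ih.add h2
    rw [Finset.sum_range_succ (fun i => (((i : ℝ) + 1) * t ^ i) • ψ (i + 1)) n]
    exact HasDerivAt.congr_of_eventuallyEq this
      (by filter_upwards with s; rw [Finset.sum_range_succ]; rfl)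

private lemma polyAux_key (b t : ℝ) (ψ : ℕ → X) (n : ℕ) :
    (∑ j ∈ Finset.range n, t ^ j • ψ j)
        - (b - t) • (∑ i ∈ Finset.range n, (((i : ℝ) + 1) * t ^ i) • ψ (i + 1))
      = (∑ j ∈ Finset.range n,
          t ^ j • ((((j : ℝ) + 1)) • ψ j - ((((j : ℝ) + 1)) * b) • ψ (j + 1)))
        + ((n : ℝ) * t ^ n) • ψ n := by
  induction n with
  | zero => simp
  | succ n ih =>
    rw [Finset.sum_range_succ, Finset.sum_range_succ, Finset.sum_range_succ,
      smul_add, show (∑ j ∈ Finset.range n, t ^ j • ψ j)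
        = (∑ j ∈ Finset.range n,
            t ^ j • ((((j : ℝ) + 1)) • ψ j - ((((j : ℝ) + 1)) * b) • ψ (j + 1)))
          + ((n : ℝ) * t ^ n) • ψ n
          + (b - t) • (∑ i ∈ Finset.range n, (((i : ℝ) + 1) * t ^ i) • ψ (i + 1)) from
        by rw [← ih]; abel]
    push_cast
    match_scalars <;> ring

private lemma re_inner_smul_left (x y : X) (r : ℝ) :
    (inner ℂ (r • x) y : ℂ).re = r * (inner ℂ x y : ℂ).re := by
  rw [RCLike.real_smul_eq_coe_smul (K := ℂ), inner_smul_left]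
  simp [RCLike.re_ofReal_mul]

private lemma re_inner_smul_right (x y : X) (r : ℝ) :
    (inner ℂ x (r • y) : ℂ).re = r * (inner ℂ x y : ℂ).re := by
  rw [RCLike.real_smul_eq_coe_smul (K := ℂ), inner_smul_right]
  simp [RCLike.re_ofReal_mul]

private lemma re_inner_comm (x y : X) : (inner ℂ x y : ℂ).re = (inner ℂ y x : ℂ).re := by
  rw [← inner_conj_symm]; exact Complex.conj_re _

private lemma re_inner_self (x : X) : (inner ℂ x x : ℂ).re = ‖x‖ ^ 2 := by
  have h := inner_self_eq_norm_sq (𝕜 := ℂ) x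
  simpa [RCLike.re_to_complex] using h

private lemma hasDerivAt_re_inner {f g : ℝ → X} {f' g' : X} {x : ℝ}
    (hf : HasDerivAt f f' x) (hg : HasDerivAt g g' x) :
    HasDerivAt (fun t => (inner ℂ (f t) (g t) : ℂ).re)
      ((inner ℂ (f x) g' : ℂ).re + (inner ℂ f' (g x) : ℂ).re) x := by
  have h := hf.inner ℂ hg
  have h2 := Complex.reCLM.hasFDerivAt.comp_hasDerivAt x h
  simp at h2; exact h2

private lemma re_intervalIntegral (f : ℝ → ℂ) (a b : ℝ)
    (hf : IntervalIntegrable f volume a b) :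
    (∫ t in a..b, f t).re = ∫ t in a..b, (f t).re := by
  have := Complex.reCLM.intervalIntegral_comp_comm hf
  simp only [Complex.reCLM_apply] at this
  rw [← this]

end Aux

theorem projection_energy_identity (k : ℕ) (hk : 1 ≤ k)
    -- X : a complex Hilbert space
    (X : Type*) [NormedAddCommGroup X] [InnerProductSpace ℂ X] [CompleteSpace X]
    (a b : ℝ) (hab : a < b)
    (v : ℝ → X) (hv : IsPolyDeg X k v)
    (p : ℝ → X) (hp : IsL2ProjOn X a b k v p) :
    -- paper's ⟨x, y⟩ (linear in the first argument) is Mathlib's `inner y x`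
    (1 / 2) * (∫ t in a..b, ‖p t‖ ^ 2) + ((b - a) / 2) * ‖p a‖ ^ 2
      = (b - a) * ((inner ℂ (p a) (v a) : ℂ)).re
        + (∫ t in a..b, (inner ℂ ((b - t) • p t) (deriv v t) : ℂ)).re := by
  classical
  have hK : k - 1 + 1 = k := Nat.succ_pred_eq_of_pos hk
  obtain ⟨hpoly, horth⟩ := hp
  obtain ⟨ψ₀, hψ₀⟩ := hpoly
  obtain ⟨φ₀, hφ₀⟩ := hv
  set ψ : ℕ → X := fun j => if h : j < k - 1 + 1 then ψ₀ ⟨j, h⟩ else 0 with hψdef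
  set φ : ℕ → X := fun j => if h : j < k + 1 then φ₀ ⟨j, h⟩ else 0 with hφdef
  have hψk : ψ k = 0 := by
    rw [hψdef]; exact dif_neg (by omega)
  -- range representations
  have hpr : ∀ t : ℝ, p t = ∑ j ∈ Finset.range k, t ^ j • ψ j := by
    intro t
    have h1 : ∑ i : Fin (k - 1 + 1), t ^ (i : ℕ) • ψ₀ i
        = ∑ j ∈ Finset.range (k - 1 + 1), t ^ j • ψ j := by
      rw [← Fin.sum_univ_eq_sum_range (fun j => t ^ j • ψ j) (k - 1 + 1)]
      refine Finset.sum_congr rfl fun i _ => ?_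
      rw [hψdef]
      simp [i.isLt]
    rw [hψ₀ t, h1, hK]
  have hvr : ∀ t : ℝ, v t = ∑ j ∈ Finset.range (k + 1), t ^ j • φ j := by
    intro t
    have h1 : ∑ i : Fin (k + 1), t ^ (i : ℕ) • φ₀ i
        = ∑ j ∈ Finset.range (k + 1), t ^ j • φ j := by
      rw [← Fin.sum_univ_eq_sum_range (fun j => t ^ j • φ j) (k + 1)]
      refine Finset.sum_congr rfl fun i _ => ?_
      rw [hφdef]
      simp [i.isLt]
    rw [hφ₀ t, h1]
  -- derivatives
  set dp : ℝ → X := fun t => ∑ i ∈ Finset.range k, (((i : ℝ) + 1) * t ^ i) • ψ (i + 1)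
    with hdpdef
  set dv : ℝ → X := fun t => ∑ i ∈ Finset.range k, (((i : ℝ) + 1) * t ^ i) • φ (i + 1)
    with hdvdef
  have hdv : ∀ t, HasDerivAt v (dv t) t := fun t =>
    (polyAux_hasDerivAt φ k t).congr_of_eventuallyEq
      (by filter_upwards with s; rw [hvr s])
  have hdp : ∀ t, HasDerivAt p (dp t) t := by
    intro t
    have h0 : HasDerivAt p
        (∑ i ∈ Finset.range (k - 1), (((i : ℝ) + 1) * t ^ i) • ψ (i + 1)) t :=
      (polyAux_hasDerivAt ψ (k - 1) t).congr_of_eventuallyEq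
        (by filter_upwards with s; rw [hpr s, hK])
    have h1 : dp t = ∑ i ∈ Finset.range (k - 1), (((i : ℝ) + 1) * t ^ i) • ψ (i + 1) := by
      rw [hdpdef]
      simp only
      conv_lhs => rw [← hK, Finset.sum_range_succ]
      rw [hK, hψk, smul_zero, add_zero]
    rw [h1]; exact h0
  -- continuity
  have hvc : Continuous v := continuous_iff_continuousAt.2 fun t => (hdv t).continuousAt
  have hpc : Continuous p := continuous_iff_continuousAt.2 fun t => (hdp t).continuousAt
  have hdpc : Continuous dp := by
    rw [hdpdef]
    exact continuous_finset_sum _ fun i _ =>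
      (continuous_const.mul (continuous_pow i)).smul continuous_const
  have hdvc : Continuous dv := by
    rw [hdvdef]
    exact continuous_finset_sum _ fun i _ =>
      (continuous_const.mul (continuous_pow i)).smul continuous_const
  have hw : Continuous fun t : ℝ => b - t := continuous_const.sub continuous_id
  have hcont : ∀ (F G : ℝ → X), Continuous F → Continuous G →
      Continuous fun t => (inner ℂ (F t) (G t) : ℂ).re := fun F G hF hG =>
    Complex.continuous_re.comp (hF.inner hG)
  have c1 := hcont p p hpc hpc
  have c2 := hcont p dp hpc hdpc
  have c3 := hcont v p hvc hpc
  have c4 := hcont v dp hvc hdpc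
  have c5 := hcont p dv hpc hdvc
  -- the five integrals
  set I1 := ∫ t in a..b, (inner ℂ (p t) (p t) : ℂ).re with hI1
  set I2 := ∫ t in a..b, (b - t) * (inner ℂ (p t) (dp t) : ℂ).re with hI2
  set I3 := ∫ t in a..b, (inner ℂ (v t) (p t) : ℂ).re with hI3
  set I4 := ∫ t in a..b, (b - t) * (inner ℂ (v t) (dp t) : ℂ).re with hI4
  set I5 := ∫ t in a..b, (b - t) * (inner ℂ (p t) (dv t) : ℂ).re with hI5
  -- equation (A): FTC for (b - t) * ⟪p t, p t⟫re
  have eqA : -I1 + 2 * I2 = -((b - a) * ‖p a‖ ^ 2) := by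
    have hF : ∀ t ∈ Set.uIcc a b,
        HasDerivAt (fun t => (b - t) * (inner ℂ (p t) (p t) : ℂ).re)
          (-((inner ℂ (p t) (p t) : ℂ).re)
            + (b - t) * (2 * (inner ℂ (p t) (dp t) : ℂ).re)) t := by
      intro t _
      have h1 := hasDerivAt_re_inner (hdp t) (hdp t)
      have h2 : HasDerivAt (fun t : ℝ => b - t) (-1) t := by
        have h0 := (hasDerivAt_const t b).sub (hasDerivAt_id t)
        simp at h0; exact h0
      have h3 : HasDerivAt (fun t => (b - t) * (inner ℂ (p t) (p t) : ℂ).re)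
          (-1 * (inner ℂ (p t) (p t) : ℂ).re
            + (b - t) * ((inner ℂ (p t) (dp t) : ℂ).re + (inner ℂ (dp t) (p t) : ℂ).re)) t :=
        h2.mul h1
      convert h3 using 1
      rw [re_inner_comm (dp t) (p t)]
      ring
    have hint : IntervalIntegrable
        (fun t => -((inner ℂ (p t) (p t) : ℂ).re)
          + (b - t) * (2 * (inner ℂ (p t) (dp t) : ℂ).re)) volume a b :=
      ((c1.neg).add (hw.mul (continuous_const.mul c2))).intervalIntegrable a b
    have hftc := intervalIntegral.integral_eq_sub_of_hasDerivAt hF hint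
    rw [intervalIntegral.integral_add (f := fun t => -((inner ℂ (p t) (p t) : ℂ).re))
      (g := fun t => (b - t) * (2 * (inner ℂ (p t) (dp t) : ℂ).re)) (c1.neg.intervalIntegrable a b)
      ((hw.mul (continuous_const.mul c2)).intervalIntegrable a b),
      intervalIntegral.integral_neg] at hftc
    have h2I : (∫ t in a..b, (b - t) * (2 * (inner ℂ (p t) (dp t) : ℂ).re)) = 2 * I2 := by
      rw [hI2, ← intervalIntegral.integral_const_mul]
      exact intervalIntegral.integral_congr fun t _ => by ring
    rw [h2I, ← hI1] at hftc
    rw [show (b - b) * (inner ℂ (p b) (p b) : ℂ).re = 0 from by ring] at hftc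
    rw [re_inner_self (p a)] at hftc
    linarith [hftc]
  -- equation (B): FTC for ⟪v t, (b - t) • p t⟫re = (b - t) * ⟪v t, p t⟫re
  have eqB : -I3 + (I4 + I5) = -((b - a) * (inner ℂ (v a) (p a) : ℂ).re) := by
    have hF : ∀ t ∈ Set.uIcc a b,
        HasDerivAt (fun t => (b - t) * (inner ℂ (v t) (p t) : ℂ).re)
          (-((inner ℂ (v t) (p t) : ℂ).re)
            + (b - t) * ((inner ℂ (v t) (dp t) : ℂ).re + (inner ℂ (p t) (dv t) : ℂ).re)) t := by
      intro t _
      have h1 := hasDerivAt_re_inner (hdv t) (hdp t)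
      have h2 : HasDerivAt (fun t : ℝ => b - t) (-1) t := by
        have h0 := (hasDerivAt_const t b).sub (hasDerivAt_id t)
        simp at h0; exact h0
      have h3 : HasDerivAt (fun t => (b - t) * (inner ℂ (v t) (p t) : ℂ).re)
          (-1 * (inner ℂ (v t) (p t) : ℂ).re
            + (b - t) * ((inner ℂ (v t) (dp t) : ℂ).re + (inner ℂ (dv t) (p t) : ℂ).re)) t :=
        h2.mul h1
      convert h3 using 1
      rw [re_inner_comm (dv t) (p t)]
      ring
    have hint : IntervalIntegrable
        (fun t => -((inner ℂ (v t) (p t) : ℂ).re)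
          + (b - t) * ((inner ℂ (v t) (dp t) : ℂ).re + (inner ℂ (p t) (dv t) : ℂ).re))
        volume a b :=
      ((c3.neg).add (hw.mul (c4.add c5))).intervalIntegrable a b
    have hftc := intervalIntegral.integral_eq_sub_of_hasDerivAt hF hint
    rw [intervalIntegral.integral_add (f := fun t => -((inner ℂ (v t) (p t) : ℂ).re))
      (g := fun t => (b - t) * ((inner ℂ (v t) (dp t) : ℂ).re + (inner ℂ (p t) (dv t) : ℂ).re))
      (c3.neg.intervalIntegrable a b)
      ((hw.mul (c4.add c5)).intervalIntegrable a b),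
      intervalIntegral.integral_neg] at hftc
    have h2I : (∫ t in a..b,
        (b - t) * ((inner ℂ (v t) (dp t) : ℂ).re + (inner ℂ (p t) (dv t) : ℂ).re)) = I4 + I5 := by
      rw [hI4, hI5, ← intervalIntegral.integral_add
        (f := fun t => (b - t) * (inner ℂ (v t) (dp t) : ℂ).re)
        (g := fun t => (b - t) * (inner ℂ (p t) (dv t) : ℂ).re)
        ((hw.mul c4).intervalIntegrable a b) ((hw.mul c5).intervalIntegrable a b)]
      exact intervalIntegral.integral_congr fun t _ => by ring
    rw [h2I, ← hI3] at hftc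
    rw [show (b - b) * (inner ℂ (v b) (p b) : ℂ).re = 0 from by ring] at hftc
    linarith [hftc]
  -- equation (C): orthogonality with χ t = p t - (b - t) • dp t
  have eqC : (I3 - I4) - (I1 - I2) = 0 := by
    set χ : ℝ → X := fun t => p t - (b - t) • dp t with hχdef
    have hχ : IsPolyDeg X (k - 1) χ := by
      refine ⟨fun i => (((i : ℕ) : ℝ) + 1) • ψ (i : ℕ)
        - ((((i : ℕ) : ℝ) + 1) * b) • ψ ((i : ℕ) + 1), fun t => ?_⟩
      have key := polyAux_key b t ψ k
      rw [hψk, smul_zero, add_zero] at key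
      have h1 : ∑ i : Fin (k - 1 + 1), t ^ (i : ℕ) •
            ((((i : ℕ) : ℝ) + 1) • ψ (i : ℕ) - ((((i : ℕ) : ℝ) + 1) * b) • ψ ((i : ℕ) + 1))
          = ∑ j ∈ Finset.range (k - 1 + 1),
            t ^ j • ((((j : ℝ) + 1)) • ψ j - ((((j : ℝ) + 1)) * b) • ψ (j + 1)) :=
        Fin.sum_univ_eq_sum_range
          (fun j => t ^ j • ((((j : ℝ) + 1)) • ψ j - ((((j : ℝ) + 1)) * b) • ψ (j + 1))) _
      calc χ t = (∑ j ∈ Finset.range k, t ^ j • ψ j)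
            - (b - t) • (∑ i ∈ Finset.range k, (((i : ℝ) + 1) * t ^ i) • ψ (i + 1)) := by
            rw [hχdef]; simp only; rw [hpr t, hdpdef]
        _ = ∑ j ∈ Finset.range k,
            t ^ j • ((((j : ℝ) + 1)) • ψ j - ((((j : ℝ) + 1)) * b) • ψ (j + 1)) := key
        _ = _ := by
            beta_reduce
            rw [h1, hK]
    have hχc : Continuous χ := by
      rw [hχdef]; exact hpc.sub (hw.smul hdpc)
    have hcc : Continuous fun t => (inner ℂ (v t - p t) (χ t) : ℂ) :=
      (hvc.sub hpc).inner hχc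
    have hre : (∫ t in a..b, (inner ℂ (v t - p t) (χ t) : ℂ).re) = 0 := by
      rw [← re_intervalIntegral _ a b (hcc.intervalIntegrable a b), horth χ hχ]
      simp
    have hpt : ∀ t : ℝ, (inner ℂ (v t - p t) (χ t) : ℂ).re
        = ((inner ℂ (v t) (p t) : ℂ).re - (b - t) * (inner ℂ (v t) (dp t) : ℂ).re)
          - ((inner ℂ (p t) (p t) : ℂ).re - (b - t) * (inner ℂ (p t) (dp t) : ℂ).re) := by
      intro t
      rw [hχdef]
      simp only [inner_sub_left, inner_sub_right, Complex.sub_re]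
      rw [re_inner_smul_right (v t) (dp t) (b - t), re_inner_smul_right (p t) (dp t) (b - t)]
      ring
    rw [intervalIntegral.integral_congr (fun t _ => hpt t)] at hre
    rw [intervalIntegral.integral_sub
      (f := fun t => (inner ℂ (v t) (p t) : ℂ).re - (b - t) * (inner ℂ (v t) (dp t) : ℂ).re)
      (g := fun t => (inner ℂ (p t) (p t) : ℂ).re - (b - t) * (inner ℂ (p t) (dp t) : ℂ).re)
      ((c3.sub (hw.mul c4)).intervalIntegrable a b)
      ((c1.sub (hw.mul c2)).intervalIntegrable a b),
      intervalIntegral.integral_sub (f := fun t => (inner ℂ (v t) (p t) : ℂ).re)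
        (g := fun t => (b - t) * (inner ℂ (v t) (dp t) : ℂ).re) (c3.intervalIntegrable a b)
        ((hw.mul c4).intervalIntegrable a b),
      intervalIntegral.integral_sub (f := fun t => (inner ℂ (p t) (p t) : ℂ).re)
        (g := fun t => (b - t) * (inner ℂ (p t) (dp t) : ℂ).re) (c1.intervalIntegrable a b)
        ((hw.mul c2).intervalIntegrable a b)] at hre
    rw [← hI1, ← hI2, ← hI3, ← hI4] at hre
    linarith [hre]
  -- rewrite the goal
  have hg1 : (∫ t in a..b, ‖p t‖ ^ 2) = I1 := by
    rw [hI1]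
    exact intervalIntegral.integral_congr fun t _ => (re_inner_self (p t)).symm
  have hg2 : (∫ t in a..b, (inner ℂ ((b - t) • p t) (deriv v t) : ℂ)).re = I5 := by
    have hdeq : deriv v = dv := funext fun t => (hdv t).deriv
    rw [hdeq]
    have hcint : Continuous fun t => (inner ℂ ((b - t) • p t) (dv t) : ℂ) :=
      (hw.smul hpc).inner hdvc
    rw [re_intervalIntegral _ a b (hcint.intervalIntegrable a b), hI5]
    exact intervalIntegral.integral_congr fun t _ => re_inner_smul_left (p t) (dv t) (b - t)
  have hg3 : ((inner ℂ (p a) (v a) : ℂ)).re = (inner ℂ (v a) (p a) : ℂ).re :=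
    re_inner_comm _ _
  rw [hg1, hg2, hg3]
  linarith [eqA, eqB, eqC]
end

section
/- Integral (space-time Galerkin) reformulation of the Gauss collocation scheme for the u-equation (identity (3.8)): under the abstract Gauss collocation SAV scheme, for every n = 1,...,N and every V-valued polynomial v_h of degree ≤ k on I_n, ∫_{I_n} i⟨u_h'(t), v_h(t)⟩ dt + ∫_{I_n} a((P^n u_h)(t), v_h(t)) dt − (τ/2)·Σ_{j=1}^k w_j · r_h(t_{nj}) · ⟨G(u_h(t_{nj})), v_h(t_{nj})⟩ = 0, where w_1, ..., w_k are the Gauss weights. -/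
/-!
Integral (space-time Galerkin) reformulation of the Gauss collocation scheme for the
u-equation (identity (3.8)):
`∫_{I_n} i⟨u_h', v_h⟩ dt + ∫_{I_n} a(P^n u_h, v_h) dt
   − (τ/2) Σ_j w_j r_h(t_nj) ⟨G(u_h(t_nj)), v_h(t_nj)⟩ = 0`
for every V-valued polynomial `v_h` of degree ≤ k.
-/

open MeasureTheory

/-- The (unnormalized) Legendre polynomial of degree `k`: `d^k/dx^k [(x² - 1)^k]`. -/
noncomputable def legendre (k : ℕ) : Polynomial ℝ :=
  Polynomial.derivative^[k] ((Polynomial.X ^ 2 - 1 : Polynomial ℝ) ^ k)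

/-- The Gauss weight `w_j = ∫_{-1}^{1} ∏_{i ≠ j} (x - c_i)/(c_j - c_i) dx`. -/
noncomputable def gaussWeight (k : ℕ) (c : Fin k → ℝ) (j : Fin k) : ℝ :=
  ∫ x in (-1 : ℝ)..1, ∏ i ∈ Finset.univ.erase j, (x - c i) / (c j - c i)

/-- The `j`-th Gauss collocation point `t_{nj} = t_{n-1} + (1 + c_j) τ / 2` of the
interval `I_n = [(n-1)τ, nτ]`. -/
noncomputable def collocPt (τ : ℝ) (n : ℕ) (cj : ℝ) : ℝ :=
  ((n : ℝ) - 1) * τ + (1 + cj) * τ / 2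

open Polynomial


lemma poly_intervalIntegrable (P : ℝ[X]) (a b : ℝ) :
    IntervalIntegrable (fun x => P.eval x) volume a b :=
  (P.continuous_aeval.intervalIntegrable _ _)

lemma poly_ftc (P : ℝ[X]) (a b : ℝ) :
    ∫ x in a..b, (derivative P).eval x = P.eval b - P.eval a := by
  apply intervalIntegral.integral_deriv_eq_sub'
  · funext x; exact (P.hasDerivAt x).deriv
  · intro x _; exact (P.hasDerivAt x).differentiableAt
  · exact (derivative P).continuous_aeval.continuousOn

lemma poly_ibp (P Q : ℝ[X]) (a b : ℝ) :
    ∫ x in a..b, (derivative P).eval x * Q.eval x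
      = P.eval b * Q.eval b - P.eval a * Q.eval a
        - ∫ x in a..b, P.eval x * (derivative Q).eval x := by
  have h := poly_ftc (P * Q) a b
  rw [derivative_mul] at h
  have hsplit : ∫ x in a..b, (derivative P * Q + P * derivative Q).eval x
      = (∫ x in a..b, (derivative P).eval x * Q.eval x)
        + ∫ x in a..b, P.eval x * (derivative Q).eval x := by
    simp only [eval_add, eval_mul]
    exact intervalIntegral.integral_add
      (((derivative P).continuous_aeval.mul Q.continuous_aeval).intervalIntegrable _ _)
      ((P.continuous_aeval.mul (derivative Q).continuous_aeval).intervalIntegrable _ _)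
  rw [hsplit] at h
  simp only [eval_mul] at h
  linarith

lemma W_iterate_deriv_root (k m : ℕ) (hm : m < k) {x : ℝ} (hx : x = 1 ∨ x = -1) :
    (Polynomial.derivative^[m] ((Polynomial.X ^ 2 - 1 : Polynomial ℝ) ^ k)).eval x = 0 := by
  set W : ℝ[X] := (X ^ 2 - 1 : ℝ[X]) ^ k with hW
  have hWne : W ≠ 0 := by
    apply pow_ne_zero
    intro h
    have := congrArg (fun p : ℝ[X] => p.eval 0) h
    simp at this
  have hdvd : (X - C x) ^ k ∣ W := by
    have : (X - C x) ∣ (X ^ 2 - 1 : ℝ[X]) := by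
      have : IsRoot (X ^ 2 - 1 : ℝ[X]) x := by
        rcases hx with h | h <;> simp [IsRoot, h]
      exact dvd_iff_isRoot.mpr this
    exact pow_dvd_pow_of_dvd this k
  have hmult : k ≤ W.rootMultiplicity x := (Polynomial.le_rootMultiplicity_iff hWne).mpr hdvd
  exact Polynomial.isRoot_iterate_derivative_of_lt_rootMultiplicity (lt_of_lt_of_le hm hmult)

/-- one step of integration by parts with vanishing boundary terms -/
lemma legendre_ibp_step (k m : ℕ) (hm : m < k) (Q : ℝ[X]) :
    ∫ x in (-1:ℝ)..1,
        (Polynomial.derivative^[m+1] ((X ^ 2 - 1 : ℝ[X]) ^ k)).eval x * Q.eval x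
      = - ∫ x in (-1:ℝ)..1,
          (Polynomial.derivative^[m] ((X ^ 2 - 1 : ℝ[X]) ^ k)).eval x
            * (derivative Q).eval x := by
  have h := poly_ibp (Polynomial.derivative^[m] ((X ^ 2 - 1 : ℝ[X]) ^ k)) Q (-1) 1
  rw [← Function.iterate_succ_apply' Polynomial.derivative] at h
  rw [h, W_iterate_deriv_root k m hm (Or.inl rfl), W_iterate_deriv_root k m hm (Or.inr rfl)]
  ring

lemma legendre_orth (k : ℕ) (Q : ℝ[X]) (hQ : Q.natDegree < k) :
    ∫ x in (-1:ℝ)..1, (legendre k).eval x * Q.eval x = 0 := by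
  have key : ∀ j : ℕ, j ≤ k → ∀ R : ℝ[X],
      ∫ x in (-1:ℝ)..1,
          (Polynomial.derivative^[k] ((X ^ 2 - 1 : ℝ[X]) ^ k)).eval x * R.eval x
        = (-1 : ℝ) ^ j * ∫ x in (-1:ℝ)..1,
            (Polynomial.derivative^[k - j] ((X ^ 2 - 1 : ℝ[X]) ^ k)).eval x
              * (Polynomial.derivative^[j] R).eval x := by
    intro j
    induction j with
    | zero => intro _ R; simp
    | succ n ih =>
      intro hn R
      have hn' : n ≤ k := Nat.le_of_succ_le hn
      rw [ih hn' R]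
      have hlt : k - (n + 1) < k := Nat.sub_lt (Nat.lt_of_lt_of_le (Nat.succ_pos n) hn) (Nat.succ_pos n)
      have hstep := legendre_ibp_step k (k - (n + 1)) hlt (Polynomial.derivative^[n] R)
      have hkn : k - (n + 1) + 1 = k - n := by omega
      rw [hkn] at hstep
      rw [hstep, ← Function.iterate_succ_apply' Polynomial.derivative n R]
      ring
  have h0 := key k le_rfl Q
  rw [Nat.sub_self] at h0
  rw [Polynomial.iterate_derivative_eq_zero hQ] at h0
  simpa [legendre] using h0

lemma W_monic (k : ℕ) : ((X ^ 2 - 1 : ℝ[X]) ^ k).Monic := by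
  have h : (X ^ 2 - 1 : ℝ[X]) = X ^ 2 - C 1 := by simp
  rw [h]
  exact (monic_X_pow_sub_C (1:ℝ) two_ne_zero).pow k

lemma legendre_coeff_k (k : ℕ) :
    (legendre k).coeff k = ((2 * k).descFactorial k : ℝ) := by
  rw [legendre, Polynomial.coeff_iterate_derivative]
  have hdeg : ((X ^ 2 - 1 : ℝ[X]) ^ k).natDegree = 2 * k := by
    have h1 : (X ^ 2 - 1 : ℝ[X]) = X ^ 2 - C 1 := by simp
    rw [Polynomial.natDegree_pow, h1, natDegree_X_pow_sub_C]
    ring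
  have hc : ((X ^ 2 - 1 : ℝ[X]) ^ k).coeff (k + k) = 1 := by
    have : k + k = 2 * k := by ring
    rw [this, ← hdeg]
    exact (W_monic k).coeff_natDegree
  rw [hc]
  have : k + k = 2 * k := by ring
  rw [this]
  simp

lemma legendre_coeff_k_ne (k : ℕ) : (legendre k).coeff k ≠ 0 := by
  rw [legendre_coeff_k]
  have h : (2 * k).descFactorial k ≠ 0 := by
    rw [Ne, Nat.descFactorial_eq_zero_iff_lt]
    omega
  exact_mod_cast h

lemma legendre_natDegree (k : ℕ) : (legendre k).natDegree = k := by
  have hle : (legendre k).natDegree ≤ k := by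
    have := Polynomial.natDegree_iterate_derivative ((X ^ 2 - 1 : ℝ[X]) ^ k) k
    have hdeg : ((X ^ 2 - 1 : ℝ[X]) ^ k).natDegree = 2 * k := by
      have h2 : (X ^ 2 - 1 : ℝ[X]) = X ^ 2 - C 1 := by simp
      rw [Polynomial.natDegree_pow, h2, natDegree_X_pow_sub_C]; ring
    rw [hdeg] at this
    rw [legendre]
    omega
  exact le_antisymm hle (Polynomial.le_natDegree_of_ne_zero (legendre_coeff_k_ne k))

lemma legendre_leadingCoeff_ne (k : ℕ) : (legendre k).leadingCoeff ≠ 0 := by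
  rw [leadingCoeff, legendre_natDegree]; exact legendre_coeff_k_ne k

lemma legendre_ne_zero (k : ℕ) : legendre k ≠ 0 :=
  fun h => legendre_leadingCoeff_ne k (by rw [h]; simp)

lemma gaussWeight_eq_integral_basis (k : ℕ) (c : Fin k → ℝ) (j : Fin k) :
    gaussWeight k c j = ∫ x in (-1:ℝ)..1, (Lagrange.basis Finset.univ c j).eval x := by
  unfold gaussWeight
  congr 1; funext x
  rw [Lagrange.basis, Polynomial.eval_prod]
  apply Finset.prod_congr rfl
  intro i _
  rw [Lagrange.basisDivisor]
  simp [div_eq_mul_inv, mul_comm]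

lemma lagrange_quad (k : ℕ) (c : Fin k → ℝ) (hc : Function.Injective c)
    (Q : ℝ[X]) (hQ : Q.degree < k) :
    ∫ x in (-1:ℝ)..1, Q.eval x = ∑ j : Fin k, gaussWeight k c j * Q.eval (c j) := by
  have hinj : Set.InjOn c ↑(Finset.univ : Finset (Fin k)) := fun a _ b _ h => hc h
  have hcard : Q.degree < (Finset.univ : Finset (Fin k)).card := by
    simpa using hQ
  have hrepr := Lagrange.eq_interpolate hinj hcard
  conv_lhs => rw [hrepr]
  rw [Lagrange.interpolate_apply]
  have : ∀ x : ℝ, (∑ i : Fin k, C (Q.eval (c i)) * Lagrange.basis Finset.univ c i).eval x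
      = ∑ i : Fin k, Q.eval (c i) * (Lagrange.basis Finset.univ c i).eval x := by
    intro x; rw [Polynomial.eval_finset_sum]; simp
  rw [intervalIntegral.integral_congr (fun x _ => this x)]
  rw [intervalIntegral.integral_finset_sum]
  · apply Finset.sum_congr rfl
    intro j _
    rw [intervalIntegral.integral_const_mul, gaussWeight_eq_integral_basis]
    ring
  · intro i _
    exact ((continuous_const.mul (Lagrange.basis Finset.univ c i).continuous_aeval).intervalIntegrable _ _)

lemma gauss_exact (k : ℕ) (hk : 1 ≤ k) (c : Fin k → ℝ) (hc : Function.Injective c)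
    (hroot : ∀ j, (legendre k).eval (c j) = 0)
    (P : ℝ[X]) (hP : P.natDegree < 2 * k) :
    ∫ x in (-1:ℝ)..1, P.eval x = ∑ j : Fin k, gaussWeight k c j * P.eval (c j) := by
  set L := legendre k
  set M : ℝ[X] := L * C L.leadingCoeff⁻¹ with hM
  have hMmonic : M.Monic := monic_mul_leadingCoeff_inv (legendre_ne_zero k)
  have hMdeg : M.natDegree = k := by
    rw [hM, natDegree_mul (legendre_ne_zero k) (by simp only [ne_eq, C_eq_zero, inv_eq_zero]; exact legendre_leadingCoeff_ne k)]
    simp [legendre_natDegree]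
  set Q := P /ₘ M with hQdef
  set R := P %ₘ M with hRdef
  have hPQR : P = M * Q + R := by
    have := Polynomial.modByMonic_add_div P M
    rw [hQdef, hRdef]
    linear_combination (norm := ring_nf) -this
  have hRdeg : R.degree < (k : ℕ) := by
    have := Polynomial.degree_modByMonic_lt P hMmonic
    rwa [degree_eq_natDegree (hMmonic.ne_zero), hMdeg] at this
  have hQdeg : Q.natDegree < k := by
    by_cases hQ0 : Q = 0
    · simp [hQ0]; omega
    have := Polynomial.natDegree_divByMonic P hMmonic
    rw [← hQdef] at this
    omega
  -- integral of M*Q part is zero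
  have hMQ : ∫ x in (-1:ℝ)..1, (M * Q).eval x = 0 := by
    have : ∀ x : ℝ, (M * Q).eval x = L.leadingCoeff⁻¹ * (L.eval x * Q.eval x) := by
      intro x; simp [hM]; ring
    rw [intervalIntegral.integral_congr (fun x _ => this x),
      intervalIntegral.integral_const_mul, legendre_orth k Q hQdeg, mul_zero]
  have hsplit : ∫ x in (-1:ℝ)..1, P.eval x
      = (∫ x in (-1:ℝ)..1, (M * Q).eval x) + ∫ x in (-1:ℝ)..1, R.eval x := by
    conv_lhs => rw [hPQR]
    simp only [eval_add]
    exact intervalIntegral.integral_add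
      (((M*Q).continuous_aeval).intervalIntegrable _ _)
      ((R.continuous_aeval).intervalIntegrable _ _)
  have hnode : ∀ j, P.eval (c j) = R.eval (c j) := by
    intro j
    conv_lhs => rw [hPQR]
    simp [hM, hroot j]
  rw [hsplit, hMQ, zero_add, lagrange_quad k c hc R hRdeg]
  apply Finset.sum_congr rfl
  intro j _
  rw [hnode j]

section Affine
variable (t0 τ : ℝ) (hτ : 0 < τ)

/-- the affine map sending [-1,1] to [t0, t0+τ] -/
noncomputable def affφ (t0 τ : ℝ) : ℝ[X] := C (t0 + τ/2) + C (τ/2) * X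

lemma affφ_eval (x : ℝ) : (affφ t0 τ).eval x = (τ/2) * x + (t0 + τ/2) := by
  simp [affφ]; ring

include hτ in
lemma affine_transfer (P : ℝ[X]) :
    ∫ t in t0..(t0+τ), P.eval t = (τ/2) * ∫ x in (-1:ℝ)..1, (P.comp (affφ t0 τ)).eval x := by
  have hc : (τ/2 : ℝ) ≠ 0 := by positivity
  have h1 : ∀ x : ℝ, (P.comp (affφ t0 τ)).eval x = P.eval ((τ/2) * x + (t0 + τ/2)) := by
    intro x; rw [eval_comp, affφ_eval]
  rw [intervalIntegral.integral_congr (fun x _ => h1 x)]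
  rw [intervalIntegral.integral_comp_mul_add (fun t => P.eval t) hc (t0 + τ/2)]
  have e1 : τ/2 * (-1) + (t0 + τ/2) = t0 := by ring
  have e2 : τ/2 * 1 + (t0 + τ/2) = t0 + τ := by ring
  rw [e1, e2, smul_eq_mul, ← mul_assoc, mul_inv_cancel₀ hc, one_mul]

/-- the shifted Legendre polynomial on [t0, t0+τ] -/
noncomputable def shLeg (k : ℕ) (t0 τ : ℝ) : ℝ[X] :=
  (legendre k).comp (C (2/τ) * X - C ((2*t0+τ)/τ))

include hτ in
lemma psi_comp_affφ :
    (C (2/τ) * X - C ((2*t0+τ)/τ) : ℝ[X]).comp (affφ t0 τ) = X := by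
  apply Polynomial.funext
  intro x
  rw [eval_comp]
  simp only [eval_sub, eval_mul, eval_C, eval_X, affφ_eval]
  field_simp
  ring

include hτ in
lemma shLeg_comp_affφ (k : ℕ) : (shLeg k t0 τ).comp (affφ t0 τ) = legendre k := by
  rw [shLeg, Polynomial.comp_assoc, psi_comp_affφ t0 τ hτ, comp_X]

include hτ in
lemma shLeg_eval_colloc (k : ℕ) (x : ℝ) :
    (shLeg k t0 τ).eval (t0 + (1+x)*τ/2) = (legendre k).eval x := by
  rw [shLeg, eval_comp]
  congr 1
  simp only [eval_sub, eval_mul, eval_C, eval_X]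
  field_simp
  ring

include hτ in
lemma shLeg_natDegree (k : ℕ) : (shLeg k t0 τ).natDegree = k := by
  rw [shLeg, natDegree_comp, legendre_natDegree]
  have : (C (2/τ) * X - C ((2*t0+τ)/τ) : ℝ[X]).natDegree = 1 := by
    have h2 : τ ≠ 0 := ne_of_gt hτ
    compute_degree!
  rw [this, mul_one]

include hτ in
lemma shLeg_coeff_k_ne (k : ℕ) : (shLeg k t0 τ).coeff k ≠ 0 := by
  have hnd := shLeg_natDegree t0 τ hτ k
  have hψdeg : (C (2/τ) * X - C ((2*t0+τ)/τ) : ℝ[X]).natDegree = 1 := by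
    have h2 : τ ≠ 0 := ne_of_gt hτ
    compute_degree!
  have hlc : (shLeg k t0 τ).leadingCoeff ≠ 0 := by
    rw [shLeg, Polynomial.leadingCoeff_comp (by rw [hψdeg]; norm_num)]
    apply mul_ne_zero (legendre_leadingCoeff_ne k)
    apply pow_ne_zero
    rw [Polynomial.leadingCoeff, hψdeg]
    have h2 : τ ≠ 0 := ne_of_gt hτ
    simp [coeff_sub]
    positivity
  rwa [Polynomial.leadingCoeff, hnd] at hlc

include hτ in
lemma shLeg_orth (k : ℕ) (Q : ℝ[X]) (hQ : Q.natDegree < k) :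
    ∫ t in t0..(t0+τ), (shLeg k t0 τ).eval t * Q.eval t = 0 := by
  have h1 : ∀ t : ℝ, (shLeg k t0 τ).eval t * Q.eval t = ((shLeg k t0 τ) * Q).eval t := by
    intro t; simp
  rw [intervalIntegral.integral_congr (fun t _ => h1 t), affine_transfer t0 τ hτ]
  have hcomp : ((shLeg k t0 τ) * Q).comp (affφ t0 τ)
      = legendre k * Q.comp (affφ t0 τ) := by
    rw [mul_comp, shLeg_comp_affφ t0 τ hτ]
  rw [hcomp]
  have hdeg : (Q.comp (affφ t0 τ)).natDegree < k := by
    have := Polynomial.natDegree_comp (p := Q) (q := affφ t0 τ)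
    have haff : (affφ t0 τ).natDegree ≤ 1 := by
      unfold affφ; compute_degree
    calc (Q.comp (affφ t0 τ)).natDegree = Q.natDegree * (affφ t0 τ).natDegree := this
    _ ≤ Q.natDegree * 1 := Nat.mul_le_mul_left _ haff
    _ < k := by omega
  have := legendre_orth k (Q.comp (affφ t0 τ)) hdeg
  have h2 : ∀ x : ℝ, (legendre k * Q.comp (affφ t0 τ)).eval x
      = (legendre k).eval x * (Q.comp (affφ t0 τ)).eval x := fun x => by simp
  rw [intervalIntegral.integral_congr (fun x _ => h2 x), this, mul_zero]

set_option maxHeartbeats 1000000 in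
include hτ in
lemma proj_root (k : ℕ) (hk : 1 ≤ k) (F : ℝ[X]) (hF : F.natDegree ≤ k)
    (horth : ∀ i, i < k → ∫ t in t0..(t0+τ), F.eval t * t ^ i = 0) :
    ∃ lam : ℝ, F = C lam * shLeg k t0 τ := by
  set Λ := shLeg k t0 τ with hΛ
  set lam := F.coeff k / Λ.coeff k with hlam
  set ρ := F - C lam * Λ with hρ
  have hΛk : Λ.coeff k ≠ 0 := shLeg_coeff_k_ne t0 τ hτ k
  have hρk : ρ.coeff k = 0 := by
    rw [hρ, coeff_sub, coeff_C_mul, hlam]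
    field_simp
    ring
  have hρdeg : ρ.natDegree ≤ k := by
    apply le_trans (natDegree_sub_le _ _)
    apply max_le hF
    apply le_trans (natDegree_mul_le)
    simp [hΛ, shLeg_natDegree t0 τ hτ k]
  have hρzero : ρ = 0 := by
    by_contra hρne
    have hρlt : ρ.natDegree < k := by
      rcases lt_or_eq_of_le hρdeg with h | h
      · exact h
      · exfalso; apply hρne
        have := Polynomial.leadingCoeff_ne_zero.mpr hρne
        rw [Polynomial.leadingCoeff, h] at this
        exact absurd hρk this
    have horthρ : ∀ i, i < k → ∫ t in t0..(t0+τ), ρ.eval t * t ^ i = 0 := by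
      intro i hi
      have hsplit : ∀ t : ℝ, ρ.eval t * t ^ i
          = F.eval t * t ^ i - lam * ((shLeg k t0 τ).eval t * (X ^ i : ℝ[X]).eval t) := by
        intro t; rw [hρ]; simp only [eval_sub, eval_mul, eval_C, eval_pow, eval_X]; ring
      rw [intervalIntegral.integral_congr (fun t _ => hsplit t)]
      rw [intervalIntegral.integral_sub, horth i hi, intervalIntegral.integral_const_mul,
        shLeg_orth t0 τ hτ k (X ^ i) (by simpa using hi)]
      · ring
      · exact Continuous.intervalIntegrable (F.continuous_aeval.mul (continuous_pow i)) _ _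
      · apply Continuous.intervalIntegrable
        apply continuous_const.mul
        exact ((shLeg k t0 τ).continuous_aeval.mul (X ^ i : ℝ[X]).continuous_aeval)
    have hsq : ∫ t in t0..(t0+τ), (ρ.eval t) ^ 2 = 0 := by
      have hexp : ∀ t : ℝ, (ρ.eval t) ^ 2
          = ∑ i ∈ Finset.range k, ρ.coeff i * (ρ.eval t * t ^ i) := by
        intro t
        conv_lhs => rw [sq]
        nth_rewrite 2 [Polynomial.eval_eq_sum_range' hρlt]
        rw [Finset.mul_sum]
        apply Finset.sum_congr rfl
        intro i _; ring
      rw [intervalIntegral.integral_congr (fun t _ => hexp t)]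
      rw [intervalIntegral.integral_finset_sum]
      · apply Finset.sum_eq_zero
        intro i hi
        rw [intervalIntegral.integral_const_mul, horthρ i (Finset.mem_range.mp hi), mul_zero]
      · intro i _
        apply Continuous.intervalIntegrable
        exact continuous_const.mul (ρ.continuous_aeval.mul (continuous_pow i))
    -- contradiction via positivity
    set f : ℝ → ℝ := fun t => (ρ.eval t) ^ 2 with hf
    have hfc : Continuous f := by fun_prop
    have hint : IntervalIntegrable f volume t0 (t0+τ) := hfc.intervalIntegrable _ _
    have hnonneg : 0 ≤ᵐ[volume.restrict (Set.Ioc t0 (t0+τ) ∪ Set.Ioc (t0+τ) t0)] f :=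
      Filter.Eventually.of_forall (fun t => sq_nonneg _)
    have hae := (intervalIntegral.integral_eq_zero_iff_of_nonneg_ae hnonneg hint).mp hsq
    have hS : Set.Finite {x : ℝ | ρ.IsRoot x} := Polynomial.finite_setOf_isRoot hρne
    have hSm : volume {x : ℝ | ρ.IsRoot x} = 0 := hS.measure_zero _
    have hopen : MeasurableSet {t : ℝ | f t ≠ 0} :=
      (isOpen_ne.preimage hfc).measurableSet
    have hrestr : volume ({t : ℝ | f t ≠ 0} ∩ (Set.Ioc t0 (t0+τ) ∪ Set.Ioc (t0+τ) t0)) = 0 := by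
      have h' := MeasureTheory.ae_iff.mp hae
      simp only [Pi.zero_apply] at h'
      rwa [Measure.restrict_apply hopen] at h'
    have hsubset : Set.Ioc t0 (t0+τ)
        ⊆ ({t : ℝ | f t ≠ 0} ∩ (Set.Ioc t0 (t0+τ) ∪ Set.Ioc (t0+τ) t0))
          ∪ {x : ℝ | ρ.IsRoot x} := by
      intro t ht
      by_cases h : ρ.eval t = 0
      · exact Or.inr h
      · left
        refine ⟨?_, Or.inl ht⟩
        simp only [hf, Set.mem_setOf_eq]
        exact pow_ne_zero 2 h
    have hvol : volume (Set.Ioc t0 (t0+τ)) = 0 := by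
      apply measure_mono_null hsubset
      exact measure_union_null hrestr hSm
    rw [Real.volume_Ioc] at hvol
    simp only [add_sub_cancel_left] at hvol
    rw [ENNReal.ofReal_eq_zero] at hvol
    linarith
  exact ⟨lam, sub_eq_zero.mp hρzero⟩

lemma interval_gauss_exact (k : ℕ) (hk : 1 ≤ k) (c : Fin k → ℝ) (hc : Function.Injective c)
    (hroot : ∀ j, (legendre k).eval (c j) = 0) (t0 τ : ℝ) (hτ : 0 < τ)
    (P : ℝ[X]) (hP : P.natDegree < 2 * k) :
    ∫ t in t0..(t0+τ), P.eval t
      = (τ/2) * ∑ j : Fin k, gaussWeight k c j * P.eval (t0 + (1 + c j) * τ / 2) := by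
  rw [affine_transfer t0 τ hτ P]
  have hdeg : (P.comp (affφ t0 τ)).natDegree < 2 * k := by
    rw [Polynomial.natDegree_comp]
    have haff : (affφ t0 τ).natDegree ≤ 1 := by unfold affφ; compute_degree
    calc P.natDegree * (affφ t0 τ).natDegree ≤ P.natDegree * 1 := Nat.mul_le_mul_left _ haff
    _ < 2 * k := by omega
  rw [gauss_exact k hk c hc hroot _ hdeg]
  congr 1
  apply Finset.sum_congr rfl
  intro j _
  rw [eval_comp, affφ_eval]
  congr 2
  ring

/-- `f` is an `E`-valued polynomial function of degree at most `d` -/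
def CP (d : ℕ) {E : Type*} [AddCommGroup E] [Module ℝ E] (f : ℝ → E) : Prop :=
  ∃ a : ℕ → E, ∀ t : ℝ, f t = ∑ m ∈ Finset.range (d+1), t ^ m • a m

section CPlemmas
variable {E F : Type*} [AddCommGroup E] [Module ℝ E] [AddCommGroup F] [Module ℝ F]

lemma CP.mono {d e : ℕ} {f : ℝ → E} (h : CP d f) (hde : d ≤ e) : CP e f := by
  obtain ⟨a, ha⟩ := h
  refine ⟨fun m => if m ≤ d then a m else 0, fun t => ?_⟩
  rw [ha t, ← Finset.sum_subset (Finset.range_subset_range.mpr (Nat.add_le_add_right hde 1))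
    (fun m _ hm => by simp only []; rw [if_neg (by simp at hm ⊢; omega), smul_zero])]
  exact Finset.sum_congr rfl fun m hm => by
    simp only []; rw [if_pos (by simp at hm; omega)]

lemma CP.zero (d : ℕ) : CP d (fun _ : ℝ => (0 : E)) :=
  ⟨fun _ => 0, fun t => by simp⟩

lemma CP.add {d : ℕ} {f g : ℝ → E} (hf : CP d f) (hg : CP d g) :
    CP d (fun t => f t + g t) := by
  obtain ⟨a, ha⟩ := hf; obtain ⟨b, hb⟩ := hg
  refine ⟨fun m => a m + b m, fun t => ?_⟩
  show f t + g t = _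
  rw [ha t, hb t, ← Finset.sum_add_distrib]
  exact Finset.sum_congr rfl fun m _ => (smul_add _ _ _).symm

lemma CP.sum {d : ℕ} {ι : Type*} (s : Finset ι) (f : ι → ℝ → E)
    (h : ∀ i ∈ s, CP d (f i)) : CP d (fun t => ∑ i ∈ s, f i t) := by
  classical
  induction s using Finset.induction_on with
  | empty => simpa using CP.zero d
  | @insert i s' hni ih =>
    have h1 : CP d (fun t => f i t + ∑ x ∈ s', f x t) :=
      (h i (Finset.mem_insert_self i s')).add
        (ih fun x hx => h x (Finset.mem_insert_of_mem hx))
    have heq : (fun t => ∑ x ∈ insert i s', f x t) = fun t => f i t + ∑ x ∈ s', f x t := by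
      funext t; rw [Finset.sum_insert hni]
    rw [heq]; exact h1

lemma CP.monomial {d q : ℕ} (hq : q ≤ d) (v : E) : CP d (fun t => t ^ q • v) := by
  classical
  refine ⟨fun m => if m = q then v else 0, fun t => ?_⟩
  show t ^ q • v = _
  rw [Finset.sum_eq_single q]
  · simp
  · intro m _ hm; simp [hm]
  · intro h; exact absurd (Finset.mem_range.mpr (by omega)) h

lemma CP.smul_fun {d : ℕ} {f : ℝ → ℂ} (z : ℂ) (hf : CP d f) :
    CP d (fun t => z * f t) := by
  obtain ⟨a, ha⟩ := hf
  refine ⟨fun m => z * a m, fun t => ?_⟩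
  show z * f t = _
  rw [ha t, Finset.mul_sum]
  exact Finset.sum_congr rfl fun m _ => by simp only []; rw [mul_smul_comm]

lemma CP.bilin {d e : ℕ} {f : ℝ → E} {g : ℝ → F} (B : E → F → ℂ)
    (hB1 : ∀ x x' y, B (x + x') y = B x y + B x' y)
    (hB2 : ∀ (r : ℝ) x y, B (r • x) y = r • B x y)
    (hB3 : ∀ x y y', B x (y + y') = B x y + B x y')
    (hB4 : ∀ (r : ℝ) x y, B x (r • y) = r • B x y)
    (hf : CP d f) (hg : CP e g) : CP (d + e) (fun t => B (f t) (g t)) := by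
  classical
  obtain ⟨a, ha⟩ := hf; obtain ⟨b, hb⟩ := hg
  have hB0 : ∀ y, B 0 y = 0 := fun y => by
    have := hB2 0 0 y; simpa using this
  have hB0' : ∀ x, B x 0 = 0 := fun x => by
    have := hB4 0 x 0; simpa using this
  have hsum1 : ∀ (s : Finset ℕ) (u : ℕ → E) (y : F),
      B (∑ m ∈ s, u m) y = ∑ m ∈ s, B (u m) y := by
    intro s u y
    induction s using Finset.induction_on with
    | empty => simpa using hB0 y
    | @insert i s' hni ih =>
      rw [Finset.sum_insert hni, Finset.sum_insert hni, hB1, ih]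
  have hsum2 : ∀ (s : Finset ℕ) (u : ℕ → F) (x : E),
      B x (∑ m ∈ s, u m) = ∑ m ∈ s, B x (u m) := by
    intro s u x
    induction s using Finset.induction_on with
    | empty => simpa using hB0' x
    | @insert i s' hni ih =>
      rw [Finset.sum_insert hni, Finset.sum_insert hni, hB3, ih]
  have key : ∀ t : ℝ, B (f t) (g t)
      = ∑ p ∈ Finset.range (d+1) ×ˢ Finset.range (e+1),
          t ^ (p.1 + p.2) • B (a p.1) (b p.2) := by
    intro t
    rw [ha t, hb t, hsum1, Finset.sum_product]
    apply Finset.sum_congr rfl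
    intro m _
    rw [hB2, hsum2, Finset.smul_sum]
    apply Finset.sum_congr rfl
    intro l _
    rw [hB4, smul_smul, ← pow_add]
  have : (fun t => B (f t) (g t))
      = fun t => ∑ p ∈ Finset.range (d+1) ×ˢ Finset.range (e+1),
          t ^ (p.1 + p.2) • B (a p.1) (b p.2) := funext key
  rw [this]
  apply CP.sum
  intro p hp
  rw [Finset.mem_product, Finset.mem_range, Finset.mem_range] at hp
  exact CP.monomial (by omega) _

end CPlemmas

lemma CP.continuous {d : ℕ} {E : Type*} [NormedAddCommGroup E] [NormedSpace ℝ E]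
    {f : ℝ → E} (h : CP d f) : Continuous f := by
  obtain ⟨a, ha⟩ := h
  have : f = fun t => ∑ m ∈ Finset.range (d+1), t ^ m • a m := funext ha
  rw [this]
  exact continuous_finset_sum _ fun m _ => (continuous_pow m).smul continuous_const

lemma monomial_quadrature (k : ℕ) (hk : 1 ≤ k) (c : Fin k → ℝ) (hc : Function.Injective c)
    (hroot : ∀ j, (legendre k).eval (c j) = 0) (t0 τ : ℝ) (hτ : 0 < τ)
    (m : ℕ) (hm : m < 2 * k) :
    ∫ t in t0..(t0+τ), t ^ m
      = (τ/2) * ∑ j : Fin k, gaussWeight k c j * (t0 + (1 + c j) * τ / 2) ^ m := by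
  have h := interval_gauss_exact k hk c hc hroot t0 τ hτ (X ^ m)
    (by simpa using hm)
  simpa using h

lemma CP_quadrature (k : ℕ) (hk : 1 ≤ k) (c : Fin k → ℝ) (hc : Function.Injective c)
    (hroot : ∀ j, (legendre k).eval (c j) = 0) (t0 τ : ℝ) (hτ : 0 < τ)
    (f : ℝ → ℂ) (hf : CP (2*k - 1) f) :
    ∫ t in t0..(t0+τ), f t
      = (τ/2 : ℝ) • ∑ j : Fin k, gaussWeight k c j • f (t0 + (1 + c j) * τ / 2) := by
  obtain ⟨a, ha⟩ := hf
  have hrange : 2 * k - 1 + 1 = 2 * k := by omega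
  rw [intervalIntegral.integral_congr (fun t _ => ha t)]
  rw [intervalIntegral.integral_finset_sum
    (fun m _ => (Continuous.intervalIntegrable (u := fun t : ℝ => t ^ m • a m) ((continuous_pow m).smul continuous_const) _ _))]
  have hterm : ∀ m ∈ Finset.range (2*k - 1 + 1),
      (∫ t in t0..(t0+τ), t ^ m • a m)
        = ((τ/2) * ∑ j : Fin k, gaussWeight k c j * (t0 + (1 + c j) * τ / 2) ^ m) • a m := by
    intro m hm
    rw [intervalIntegral.integral_smul_const,
      monomial_quadrature k hk c hc hroot t0 τ hτ m (by simp at hm; omega)]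
  rw [Finset.sum_congr rfl hterm]
  -- now reorganize sums
  conv_rhs =>
    rw [Finset.smul_sum]
  have hrhs : ∀ j : Fin k, (τ/2 : ℝ) • (gaussWeight k c j • f (t0 + (1 + c j) * τ / 2))
      = ∑ m ∈ Finset.range (2*k - 1 + 1),
          ((τ/2) * (gaussWeight k c j * (t0 + (1 + c j) * τ / 2) ^ m)) • a m := by
    intro j
    rw [ha (t0 + (1 + c j) * τ / 2), Finset.smul_sum, Finset.smul_sum]
    apply Finset.sum_congr rfl
    intro m _
    simp only [smul_smul]
  rw [Finset.sum_congr rfl (fun j _ => hrhs j), Finset.sum_comm]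
  apply Finset.sum_congr rfl
  intro m _
  rw [← Finset.sum_smul]
  congr 1
  rw [Finset.mul_sum]

end Affine

lemma CP.sub {E : Type*} [AddCommGroup E] [Module ℝ E] {d : ℕ} {f g : ℝ → E}
    (hf : CP d f) (hg : CP d g) : CP d (fun t => f t - g t) := by
  obtain ⟨a, ha⟩ := hf; obtain ⟨b, hb⟩ := hg
  refine ⟨fun m => a m - b m, fun t => ?_⟩
  show f t - g t = _
  rw [ha t, hb t, ← Finset.sum_sub_distrib]
  exact Finset.sum_congr rfl fun m _ => by rw [smul_sub]

lemma CP.const {E : Type*} [AddCommGroup E] [Module ℝ E] (d : ℕ) (v : E) :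
    CP d (fun _ : ℝ => v) := by
  have h := CP.monomial (le_refl 0) v
  have : (fun t : ℝ => t ^ 0 • v) = fun _ : ℝ => v := by
    funext t; rw [pow_zero, one_smul]
  exact (this ▸ h).mono (Nat.zero_le d)

lemma real_moment_root (k : ℕ) (hk : 1 ≤ k) (t0 τ : ℝ) (hτ : 0 < τ)
    (g : ℝ → ℝ) (arr : ℕ → ℝ)
    (hg : ∀ t, g t = ∑ m ∈ Finset.range (k+1), t ^ m * arr m)
    (hmom : ∀ i, i < k → ∫ t in t0..(t0+τ), g t * t ^ i = 0)
    (x : ℝ) (hx : (legendre k).eval ((2 * x - 2 * t0 - τ)/τ) = 0) : g x = 0 := by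
  set F : ℝ[X] := ∑ m ∈ Finset.range (k+1), C (arr m) * X ^ m with hF
  have hFeval : ∀ t, F.eval t = g t := by
    intro t
    rw [hg t, hF, Polynomial.eval_finset_sum]
    exact Finset.sum_congr rfl fun m _ => by
      rw [eval_mul, eval_C, eval_pow, eval_X, mul_comm]
  have hFdeg : F.natDegree ≤ k := by
    apply Polynomial.natDegree_sum_le_of_forall_le
    intro m hm
    refine le_trans natDegree_mul_le ?_
    simp only [natDegree_C, natDegree_pow, natDegree_X, zero_add, mul_one]
    exact Nat.lt_succ_iff.mp (Finset.mem_range.mp hm)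
  have hFmom : ∀ i, i < k → ∫ t in t0..(t0+τ), F.eval t * t ^ i = 0 := by
    intro i hi
    rw [intervalIntegral.integral_congr (fun t _ => by rw [hFeval t])]
    exact hmom i hi
  obtain ⟨lam, hlam⟩ := proj_root t0 τ hτ k hk F hFdeg hFmom
  have hev := congrArg (fun P : ℝ[X] => P.eval x) hlam
  simp only [eval_mul, eval_C] at hev
  rw [hFeval x] at hev
  rw [hev, shLeg, eval_comp]
  have : (C (2/τ) * X - C ((2*t0+τ)/τ) : ℝ[X]).eval x = (2 * x - 2 * t0 - τ)/τ := by
    simp only [eval_sub, eval_mul, eval_C, eval_X]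
    field_simp
    ring
  rw [this, hx, mul_zero]

lemma cplx_moment_root (k : ℕ) (hk : 1 ≤ k) (t0 τ : ℝ) (hτ : 0 < τ)
    (q : ℝ → ℂ) (hq : CP k q)
    (hmom : ∀ i, i < k → (∫ t in t0..(t0+τ), (t ^ i : ℝ) • q t) = 0)
    (x : ℝ) (hx : (legendre k).eval ((2 * x - 2 * t0 - τ)/τ) = 0) : q x = 0 := by
  obtain ⟨b, hb⟩ := hq
  have hqc : Continuous q := by
    have : q = fun t => ∑ m ∈ Finset.range (k+1), t ^ m • b m := funext hb
    rw [this]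
    exact continuous_finset_sum _ fun m _ => (continuous_pow m).smul continuous_const
  have hmomL : ∀ (L : ℂ →L[ℝ] ℝ), ∀ i, i < k →
      ∫ t in t0..(t0+τ), L ((t ^ i : ℝ) • q t) = 0 := by
    intro L i hi
    have hint : IntervalIntegrable (fun t => (t ^ i : ℝ) • q t) volume t0 (t0+τ) :=
      ((continuous_pow i).smul hqc).intervalIntegrable _ _
    rw [ContinuousLinearMap.intervalIntegral_comp_comm L hint, hmom i hi, map_zero]
  have hre := real_moment_root k hk t0 τ hτ (fun t => (q t).re) (fun m => (b m).re)
    (fun t => by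
      show (q t).re = _
      rw [hb t, Complex.re_sum]
      exact Finset.sum_congr rfl fun m _ => by
        rw [Complex.real_smul, Complex.re_ofReal_mul])
    (fun i hi => by
      have := hmomL Complex.reCLM i hi
      rw [← this]
      apply intervalIntegral.integral_congr
      intro t _
      simp only [Complex.reCLM_apply, Complex.real_smul, Complex.re_ofReal_mul]
      ring) x hx
  have him := real_moment_root k hk t0 τ hτ (fun t => (q t).im) (fun m => (b m).im)
    (fun t => by
      show (q t).im = _
      rw [hb t, Complex.im_sum]
      exact Finset.sum_congr rfl fun m _ => by
        rw [Complex.real_smul, Complex.im_ofReal_mul])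
    (fun i hi => by
      have := hmomL Complex.imCLM i hi
      rw [← this]
      apply intervalIntegral.integral_congr
      intro t _
      simp only [Complex.imCLM_apply, Complex.real_smul, Complex.im_ofReal_mul]
      ring) x hx
  exact Complex.ext hre him

section InnerHelpers
variable {V : Type*} [NormedAddCommGroup V] [InnerProductSpace ℂ V]

lemma real_smul_vec (r : ℝ) (x : V) : (r : ℂ) • x = r • x := by
  rw [← Complex.coe_algebraMap]
  exact algebraMap_smul ℂ r x

lemma innB_add_left (x x' y : V) : (inner ℂ (x + x') y : ℂ) = inner ℂ x y + inner ℂ x' y :=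
  inner_add_left x x' y

lemma innB_smul_left (r : ℝ) (x y : V) : (inner ℂ (r • x) y : ℂ) = r • (inner ℂ x y : ℂ) := by
  rw [← real_smul_vec]
  exact inner_smul_real_left x y r

lemma innB_add_right (x : V) (y y' : V) : (inner ℂ x (y + y') : ℂ) = inner ℂ x y + inner ℂ x y' :=
  inner_add_right x y y'

lemma innB_smul_right (r : ℝ) (x y : V) : (inner ℂ x (r • y) : ℂ) = r • (inner ℂ x y : ℂ) := by
  rw [← real_smul_vec]
  exact inner_smul_real_right x y r

lemma cp_inner {d e : ℕ} {f g : ℝ → V} (hf : CP d f) (hg : CP e g) :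
    CP (d + e) (fun t => (inner ℂ (f t) (g t) : ℂ)) :=
  CP.bilin (fun x y => (inner ℂ x y : ℂ)) innB_add_left innB_smul_left innB_add_right
    innB_smul_right hf hg

end InnerHelpers

lemma isPolyDeg_cp {X : Type*} [AddCommGroup X] [Module ℝ X] {m : ℕ} {f : ℝ → X}
    (h : IsPolyDeg X m f) : CP m f := by
  obtain ⟨φ, hφ⟩ := h
  refine ⟨fun i => if hi : i < m + 1 then φ ⟨i, hi⟩ else 0, fun t => ?_⟩
  rw [hφ t, ← Fin.sum_univ_eq_sum_range (fun i => t ^ i • if hi : i < m + 1 then φ ⟨i, hi⟩ else 0)]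
  exact Finset.sum_congr rfl fun i _ => by rw [dif_pos i.isLt]

set_option maxHeartbeats 2000000 in
theorem galerkin_reformulation_u_equation
    (k N : ℕ) (hk : 1 ≤ k) (hN : 1 ≤ N) (T : ℝ) (hT : 0 < T)
    -- the Gauss points of [-1,1]: the k roots of the Legendre polynomial of degree k
    (c : Fin k → ℝ) (hmono : StrictMono c)
    (hroot : ∀ j, (legendre k).eval (c j) = 0)
    (hmem : ∀ j, c j ∈ Set.Ioo (-1 : ℝ) 1)
    -- V : a finite-dimensional complex inner product space
    (V : Type*) [NormedAddCommGroup V] [InnerProductSpace ℂ V] [FiniteDimensional ℂ V]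
    -- a : a Hermitian sesquilinear form (paper's convention: linear in the first argument)
    (a : V → V → ℂ)
    (ha_add : ∀ v₁ v₂ w : V, a (v₁ + v₂) w = a v₁ w + a v₂ w)
    (ha_smul : ∀ (z : ℂ) (v w : V), a (z • v) w = z * a v w)
    (ha_herm : ∀ v w : V, a v w = starRingEnd ℂ (a w v))
    -- G : an arbitrary map
    -- (paper's ⟨x, y⟩, linear in x, is Mathlib's `inner y x`)
    (G : V → V)
    -- numerical solution: continuous, piecewise polynomial of degree ≤ k in time
    (uh : ℝ → V) (rh : ℝ → ℝ)
    (hupoly : ∀ n ∈ Finset.Icc 1 N, ∃ p : ℝ → V, IsPolyDeg V k p ∧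
      ∀ t ∈ Set.Icc (((n : ℝ) - 1) * (T / N)) ((n : ℝ) * (T / N)), uh t = p t)
    (hrpoly : ∀ n ∈ Finset.Icc 1 N, ∃ q : ℝ → ℝ, IsPolyDeg ℝ k q ∧
      ∀ t ∈ Set.Icc (((n : ℝ) - 1) * (T / N)) ((n : ℝ) * (T / N)), rh t = q t)
    -- Gauss collocation equation (i):  i⟨u_h'(t_nj), v⟩ + a(u_h(t_nj), v)
    --   - r_h(t_nj) ⟨G(u_h(t_nj)), v⟩ = 0  for all v ∈ V
    (hu_eq : ∀ n ∈ Finset.Icc 1 N, ∀ j : Fin k, ∀ v : V,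
      Complex.I * (inner ℂ v (deriv uh (collocPt (T / N) n (c j))) : ℂ)
        + a (uh (collocPt (T / N) n (c j))) v
        - (rh (collocPt (T / N) n (c j)) : ℂ)
            * (inner ℂ v (G (uh (collocPt (T / N) n (c j)))) : ℂ) = 0)
    -- Gauss collocation equation (ii): r_h'(t_nj) = (1/2) Re ⟨G(u_h(t_nj)), u_h'(t_nj)⟩
    (hr_eq : ∀ n ∈ Finset.Icc 1 N, ∀ j : Fin k,
      deriv rh (collocPt (T / N) n (c j))
        = (1 / 2) * ((inner ℂ (deriv uh (collocPt (T / N) n (c j)))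
            (G (uh (collocPt (T / N) n (c j)))) : ℂ)).re) :
    -- conclusion: the integral (space-time Galerkin) identity (3.8)
    ∀ n ∈ Finset.Icc 1 N, ∀ Puh : ℝ → V,
      IsL2ProjOn V (((n : ℝ) - 1) * (T / N)) ((n : ℝ) * (T / N)) k uh Puh →
      ∀ vh : ℝ → V, IsPolyDeg V k vh →
        (∫ t in (((n : ℝ) - 1) * (T / N))..((n : ℝ) * (T / N)),
            Complex.I * (inner ℂ (vh t) (deriv uh t) : ℂ))
          + (∫ t in (((n : ℝ) - 1) * (T / N))..((n : ℝ) * (T / N)), a (Puh t) (vh t))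
          - ((T / N : ℝ) : ℂ) / 2 * ∑ j : Fin k,
              (gaussWeight k c j : ℂ) * (rh (collocPt (T / N) n (c j)) : ℂ)
                * (inner ℂ (vh (collocPt (T / N) n (c j)))
                    (G (uh (collocPt (T / N) n (c j)))) : ℂ) = 0 := by
  
  intro n hn Puh hPuh vh hvh
  have hc : Function.Injective c := hmono.injective
  have hNpos : (0 : ℝ) < (N : ℝ) := by
    have : 0 < N := hN
    exact_mod_cast this
  set τ : ℝ := T / N with hτdef
  have hτ : 0 < τ := div_pos hT hNpos
  have ht1 : (n : ℝ) * τ = ((n : ℝ) - 1) * τ + τ := by ring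
  set t0 : ℝ := ((n : ℝ) - 1) * τ with ht0def
  have hle : t0 ≤ t0 + τ := by linarith
  rw [ht1]
  obtain ⟨p, hp, hup⟩ := hupoly n hn
  have hup' : ∀ t ∈ Set.Icc t0 (t0 + τ), uh t = p t := by
    intro t ht
    exact hup t ⟨ht.1, by rw [ht1]; exact ht.2⟩
  have hcolloc : ∀ j : Fin k, collocPt τ n (c j) = t0 + (1 + c j) * τ / 2 := by
    intro j
    show ((n : ℝ) - 1) * τ + (1 + c j) * τ / 2 = t0 + (1 + c j) * τ / 2
    rw [ht0def]
  have hsIoo : ∀ j : Fin k, t0 + (1 + c j) * τ / 2 ∈ Set.Ioo t0 (t0 + τ) := by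
    intro j
    obtain ⟨h1, h2⟩ := hmem j
    constructor
    · nlinarith
    · nlinarith
  -- derivative of p
  obtain ⟨φ, hφ⟩ := hp
  set p' : ℝ → V := fun t => ∑ i : Fin (k+1), (((i : ℕ) : ℝ) * t ^ ((i : ℕ) - 1)) • φ i
    with hp'def
  have hpe : p = fun t => ∑ i : Fin (k+1), t ^ (i : ℕ) • φ i := funext hφ
  have hpder : ∀ t : ℝ, HasDerivAt p (p' t) t := by
    intro t
    rw [hpe]
    exact HasDerivAt.fun_sum fun i _ => (hasDerivAt_pow (i : ℕ) t).smul_const (φ i)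
  have hp'cp : CP (k - 1) p' := by
    apply CP.sum
    intro i _
    have h1 : (fun t : ℝ => (((i : ℕ) : ℝ) * t ^ ((i : ℕ) - 1)) • φ i)
        = fun t : ℝ => t ^ ((i : ℕ) - 1) • (((i : ℕ) : ℝ) • φ i) := by
      funext t
      rw [smul_smul, mul_comm]
    rw [h1]
    exact CP.monomial (by have := i.isLt; omega) _
  have hderIoo : ∀ t ∈ Set.Ioo t0 (t0 + τ), deriv uh t = p' t := by
    intro t ht
    have hev : uh =ᶠ[nhds t] p :=
      Filter.eventuallyEq_of_mem (Icc_mem_nhds ht.1 ht.2) fun x hx => hup' x hx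
    rw [hev.deriv_eq]
    exact (hpder t).deriv
  -- CP structures
  have hvhcp : CP k vh := isPolyDeg_cp hvh
  have hPuhcp : CP (k - 1) Puh := isPolyDeg_cp hPuh.1
  have ha2 : ∀ (r : ℝ) (x y : V), a (r • x) y = r • a x y := by
    intro r x y
    rw [← real_smul_vec, ha_smul, Complex.real_smul]
  have ha3 : ∀ (x y y' : V), a x (y + y') = a x y + a x y' := by
    intro x y y'
    rw [ha_herm, ha_add, map_add, ← ha_herm, ← ha_herm]
  have ha4 : ∀ (r : ℝ) (x y : V), a x (r • y) = r • a x y := by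
    intro r x y
    rw [ha_herm, ← real_smul_vec, ha_smul, map_mul, Complex.conj_ofReal, ← ha_herm,
      Complex.real_smul]
  have hg1cp : CP (2 * k - 1) (fun t => Complex.I * (inner ℂ (vh t) (p' t) : ℂ)) :=
    CP.smul_fun Complex.I ((cp_inner hvhcp hp'cp).mono (by omega))
  have hg2cp : CP (2 * k - 1) (fun t => a (Puh t) (vh t)) :=
    (CP.bilin a ha_add ha2 ha3 ha4 hPuhcp hvhcp).mono (by omega)
  -- replace deriv uh by p' in the first integral
  have hA : (∫ t in t0..(t0 + τ), Complex.I * (inner ℂ (vh t) (deriv uh t) : ℂ))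
      = ∫ t in t0..(t0 + τ), Complex.I * (inner ℂ (vh t) (p' t) : ℂ) := by
    rw [intervalIntegral.integral_of_le hle, intervalIntegral.integral_of_le hle,
      MeasureTheory.integral_Ioc_eq_integral_Ioo, MeasureTheory.integral_Ioc_eq_integral_Ioo]
    apply MeasureTheory.setIntegral_congr_fun measurableSet_Ioo
    intro t ht
    show Complex.I * (inner ℂ (vh t) (deriv uh t) : ℂ) = Complex.I * (inner ℂ (vh t) (p' t) : ℂ)
    rw [hderIoo t ht]
  -- projection identity at Gauss points
  have hproj : ∀ j : Fin k, Puh (t0 + (1 + c j) * τ / 2) = uh (t0 + (1 + c j) * τ / 2) := by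
    intro j
    have key : ∀ e : V,
        (inner ℂ (p (t0 + (1 + c j) * τ / 2) - Puh (t0 + (1 + c j) * τ / 2)) e : ℂ) = 0 := by
      intro e
      have hqcp : CP k (fun t => (inner ℂ (p t - Puh t) e : ℂ)) := by
        have hD : CP k (fun t => p t - Puh t) :=
          (isPolyDeg_cp ⟨φ, hφ⟩).sub (hPuhcp.mono (by omega))
        exact (cp_inner hD (CP.const 0 e)).mono (by omega)
      have hmomq : ∀ i, i < k →
          (∫ t in t0..(t0 + τ), (t ^ i : ℝ) • (inner ℂ (p t - Puh t) e : ℂ)) = 0 := by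
        intro i hi
        have hχ : IsPolyDeg V (k - 1) (fun t => t ^ i • e) := by
          refine ⟨fun m => if (m : ℕ) = i then e else 0, fun t => ?_⟩
          rw [Finset.sum_eq_single (⟨i, by omega⟩ : Fin (k - 1 + 1))]
          · simp
          · intro m _ hm
            have hmi : (m : ℕ) ≠ i := fun h => hm (Fin.ext (by simpa using h))
            simp [hmi]
          · intro h
            exact absurd (Finset.mem_univ _) h
        have h0 := hPuh.2 _ hχ
        rw [ht1] at h0
        rw [intervalIntegral.integral_of_le hle] at h0 ⊢
        rw [← h0]
        apply MeasureTheory.setIntegral_congr_fun measurableSet_Ioc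
        intro t ht
        show (t ^ i : ℝ) • (inner ℂ (p t - Puh t) e : ℂ) = (inner ℂ (uh t - Puh t) (t ^ i • e) : ℂ)
        rw [hup' t (Set.Ioc_subset_Icc_self ht)]
        exact (innB_smul_right (t ^ i) _ e).symm
      have hx : (legendre k).eval
          ((2 * (t0 + (1 + c j) * τ / 2) - 2 * t0 - τ) / τ) = 0 := by
        have harg : (2 * (t0 + (1 + c j) * τ / 2) - 2 * t0 - τ) / τ = c j := by
          field_simp
          ring
        rw [harg]
        exact hroot j
      exact cplx_moment_root k hk t0 τ hτ _ hqcp hmomq _ hx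
    have hD0 : p (t0 + (1 + c j) * τ / 2) - Puh (t0 + (1 + c j) * τ / 2) = 0 :=
      inner_self_eq_zero.mp (key _)
    have := hup' _ (Set.mem_Icc_of_Ioo (hsIoo j))
    rw [this]
    linear_combination (norm := abel) -hD0
  -- quadrature
  have hg12 : CP (2 * k - 1)
      (fun t => Complex.I * (inner ℂ (vh t) (p' t) : ℂ) + a (Puh t) (vh t)) :=
    hg1cp.add hg2cp
  have hquad := CP_quadrature k hk c hc hroot t0 τ hτ _ hg12
  have hsplit : (∫ t in t0..(t0 + τ),
        (Complex.I * (inner ℂ (vh t) (p' t) : ℂ) + a (Puh t) (vh t)))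
      = (∫ t in t0..(t0 + τ), Complex.I * (inner ℂ (vh t) (p' t) : ℂ))
        + ∫ t in t0..(t0 + τ), a (Puh t) (vh t) :=
    intervalIntegral.integral_add (hg1cp.continuous.intervalIntegrable _ _)
      (hg2cp.continuous.intervalIntegrable _ _)
  rw [hA, ← hsplit, hquad]
  -- pointwise identity at the Gauss points
  have hpt : ∀ j : Fin k,
      Complex.I * (inner ℂ (vh (t0 + (1 + c j) * τ / 2)) (p' (t0 + (1 + c j) * τ / 2)) : ℂ)
        + a (Puh (t0 + (1 + c j) * τ / 2)) (vh (t0 + (1 + c j) * τ / 2))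
      = (rh (collocPt τ n (c j)) : ℂ)
          * (inner ℂ (vh (collocPt τ n (c j))) (G (uh (collocPt τ n (c j)))) : ℂ) := by
    intro j
    have he := hu_eq n hn j (vh (collocPt τ n (c j)))
    rw [hcolloc j] at he ⊢
    rw [← hderIoo _ (hsIoo j), hproj j]
    linear_combination he
  rw [Finset.sum_congr rfl fun j _ => congrArg (gaussWeight k c j • ·) (hpt j)]
  -- final scalar bookkeeping
  rw [sub_eq_zero, Complex.real_smul]
  push_cast
  rw [Finset.mul_sum, Finset.mul_sum]
  apply Finset.sum_congr rfl
  intro j _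
  rw [Complex.real_smul]
  push_cast
  ring
end
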